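/- arXiv:2003.13651 — 3 statements merged into one kernel-verified Lean document; each statement's English description precedes it below -/
import Mathlib

section
/- In the logic QRC₁, if φ ⊢ ψ[x/c] is derivable, x is not free in φ, and the constant c occurs in neither φ nor ψ, then φ ⊢ ∀xψ is derivable. -/
/-- A signature: constants and relation symbols with arities (no function symbols). -/
structure Signature where
  Const : Type
  Rel : Type
  arity : Rel → ℕ

/-- Terms: variables (numbered) or constants. -/
inductive Term (Sig : Signature) : Type where
  | var : ℕ → Term Sig
  | const : Sig.Const → Term Sig

/-- Strictly positive formulas of QRC₁. -/
inductive Formula (Sig : Signature) : Type where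
  | top : Formula Sig
  | rel : (S : Sig.Rel) → (Fin (Sig.arity S) → Term Sig) → Formula Sig
  | and : Formula Sig → Formula Sig → Formula Sig
  | dia : Formula Sig → Formula Sig
  | all : ℕ → Formula Sig → Formula Sig

namespace Term

variable {Sig : Signature}

def fv : Term Sig → Set ℕ
  | var x => {x}
  | const _ => ∅

def consts : Term Sig → Set Sig.Const
  | var _ => ∅
  | const c => {c}

def subst (t : Term Sig) (x : ℕ) (u : Term Sig) : Term Sig :=
  match t with
  | var y => if y = x then u else var y
  | const c => const c

end Term

namespace Formula

variable {Sig : Signature}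

/-- Free variables of a formula. -/
def fv : Formula Sig → Set ℕ
  | top => ∅
  | rel _ ts => ⋃ i, (ts i).fv
  | and φ ψ => φ.fv ∪ ψ.fv
  | dia φ => φ.fv
  | all x φ => φ.fv \ {x}

/-- Constants occurring in a formula. -/
def consts : Formula Sig → Set Sig.Const
  | top => ∅
  | rel _ ts => ⋃ i, (ts i).consts
  | and φ ψ => φ.consts ∪ ψ.consts
  | dia φ => φ.consts
  | all _ φ => φ.consts

/-- Simultaneous substitution of the term `u` for the free occurrences of `x`. -/
def subst : Formula Sig → ℕ → Term Sig → Formula Sig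
  | top, _, _ => top
  | rel S ts, x, u => rel S (fun i => (ts i).subst x u)
  | and φ ψ, x, u => and (φ.subst x u) (ψ.subst x u)
  | dia φ, x, u => dia (φ.subst x u)
  | all y φ, x, u => if y = x then all y φ else all y (φ.subst x u)

/-- `t` is free for `x` in `φ`: no free variable of `t` becomes bound in `φ[x/t]`. -/
def freeFor : Formula Sig → ℕ → Term Sig → Prop
  | top, _, _ => True
  | rel _ _, _, _ => True
  | and φ ψ, x, t => φ.freeFor x t ∧ ψ.freeFor x t
  | dia φ, x, t => φ.freeFor x t
  | all y φ, x, t => x ∉ (Formula.all y φ).fv ∨ (y ∉ t.fv ∧ φ.freeFor x t)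

/-- Modal depth. -/
def mdepth : Formula Sig → ℕ
  | top => 0
  | rel _ _ => 0
  | and φ ψ => max φ.mdepth ψ.mdepth
  | dia φ => φ.mdepth + 1
  | all _ φ => φ.mdepth

def size : Formula Sig → ℕ
  | top => 1
  | rel _ _ => 1
  | and φ ψ => φ.size + ψ.size + 1
  | dia φ => φ.size + 1
  | all _ φ => φ.size + 1

theorem size_subst (φ : Formula Sig) (x : ℕ) (t : Term Sig) :
    (φ.subst x t).size = φ.size := by
  induction φ with
  | top => rfl
  | rel S ts => rfl
  | and φ ψ ihφ ihψ => simp [Formula.subst, Formula.size, ihφ, ihψ]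
  | dia φ ih => simp [Formula.subst, Formula.size, ih]
  | all y φ ih =>
      by_cases h : y = x <;> simp [Formula.subst, Formula.size, h, ih]

end Formula

/-- Derivability of sequents `φ ⊢ ψ` in QRC₁. -/
inductive Derives {Sig : Signature} : Formula Sig → Formula Sig → Prop where
  | topIntro (φ : Formula Sig) : Derives φ .top
  | refl (φ : Formula Sig) : Derives φ φ
  | andE₁ (φ ψ : Formula Sig) : Derives (.and φ ψ) φ
  | andE₂ (φ ψ : Formula Sig) : Derives (.and φ ψ) ψ
  | andI {φ ψ χ : Formula Sig} : Derives φ ψ → Derives φ χ → Derives φ (.and ψ χ)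
  | cut {φ ψ χ : Formula Sig} : Derives φ ψ → Derives ψ χ → Derives φ χ
  | nec {φ ψ : Formula Sig} : Derives φ ψ → Derives (.dia φ) (.dia ψ)
  | diaTrans (φ : Formula Sig) : Derives (.dia (.dia φ)) (.dia φ)
  | diaAll (x : ℕ) (φ : Formula Sig) : Derives (.dia (.all x φ)) (.all x (.dia φ))
  | allR {φ ψ : Formula Sig} {x : ℕ} : Derives φ ψ → x ∉ φ.fv → Derives φ (.all x ψ)
  | allL {φ ψ : Formula Sig} {x : ℕ} {t : Term Sig} :
      Derives (φ.subst x t) ψ → φ.freeFor x t → Derives (.all x φ) ψ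
  | termInst {φ ψ : Formula Sig} {x : ℕ} {t : Term Sig} :
      Derives φ ψ → φ.freeFor x t → ψ.freeFor x t →
      Derives (φ.subst x t) (ψ.subst x t)
  | constGen {φ ψ : Formula Sig} {x : ℕ} {c : Sig.Const} :
      Derives (φ.subst x (.const c)) (ψ.subst x (.const c)) →
      c ∉ φ.consts → c ∉ ψ.consts → Derives φ ψ

/-- Extension of a signature by a collection `C` of new constants. -/
def Signature.extend (Sig : Signature) (C : Type) : Signature :=
  ⟨Sig.Const ⊕ C, Sig.Rel, Sig.arity⟩

/-- A term of `Sig` seen as a term of the extended signature. -/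
def Term.lift {Sig : Signature} {C : Type} : Term Sig → Term (Sig.extend C)
  | .var x => .var x
  | .const c => .const (Sum.inl c)

/-- A formula of `Sig` seen as a formula of the extended signature. -/
def Formula.lift {Sig : Signature} {C : Type} : Formula Sig → Formula (Sig.extend C)
  | .top => .top
  | .rel S ts => .rel S (fun i => (ts i).lift)
  | .and φ ψ => .and φ.lift ψ.lift
  | .dia φ => .dia φ.lift
  | .all x φ => .all x φ.lift

/-! ### Relational semantics -/

/-- A relational model (on an underlying frame `⟨W, R, D⟩`):
worlds, accessibility, finite domains, constant and relation interpretations. -/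
structure Model (Sig : Signature) where
  W : Type
  U : Type
  nonempty : Nonempty W
  R : W → W → Prop
  D : W → Set U
  Dfin : ∀ w, (D w).Finite
  I : W → Sig.Const → U
  Imem : ∀ w c, I w c ∈ D w
  J : (w : W) → (S : Sig.Rel) → Set (Fin (Sig.arity S) → U)
  Jmem : ∀ w S f, f ∈ J w S → ∀ i, f i ∈ D w

namespace Model

variable {Sig : Signature}

/-- A `w`-assignment: a map from variables into the domain of `w`. -/
def IsAssignment (M : Model Sig) (w : M.W) (g : ℕ → M.U) : Prop :=
  ∀ n, g n ∈ M.D w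

/-- Value of a term at a world under an assignment. -/
def tval (M : Model Sig) (w : M.W) (g : ℕ → M.U) : Term Sig → M.U
  | .var x => g x
  | .const c => M.I w c

end Model

/-- `Γ`-alternative assignments: they agree on all variables outside `Γ`. -/
def AltOn {U : Type} (Γ : Set ℕ) (g h : ℕ → U) : Prop :=
  ∀ y, y ∉ Γ → g y = h y

/-- Truth at a world under an assignment. -/
def Model.Forces {Sig : Signature} (M : Model Sig) :
    M.W → (ℕ → M.U) → Formula Sig → Prop
  | _, _, .top => True
  | w, g, .rel S ts => (fun i => M.tval w g (ts i)) ∈ M.J w S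
  | w, g, .and φ ψ => M.Forces w g φ ∧ M.Forces w g ψ
  | w, g, .dia φ => ∃ v, M.R w v ∧ M.Forces v g φ
  | w, g, .all x φ =>
      ∀ h : ℕ → M.U, M.IsAssignment w h → AltOn {x} g h → M.Forces w h φ

/-- Adequate models: inclusive, transitive, and concordant. -/
def Model.Adequate {Sig : Signature} (M : Model Sig) : Prop :=
  (∀ w u, M.R w u → M.D w ⊆ M.D u) ∧
  (∀ w u v, M.R w u → M.R u v → M.R w v) ∧
  (∀ w u, M.R w u → ∀ c, M.I w c = M.I u c)

/-- The model `M` restricted at the world `r`. -/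
def Model.restrict {Sig : Signature} (M : Model Sig) (r : M.W) : Model Sig where
  W := {w : M.W // w = r ∨ M.R r w}
  U := M.U
  nonempty := ⟨⟨r, Or.inl rfl⟩⟩
  R w v := M.R w.1 v.1
  D w := M.D w.1
  Dfin w := M.Dfin w.1
  I w c := M.I w.1 c
  Imem w c := M.Imem w.1 c
  J w S := M.J w.1 S
  Jmem w S f h i := M.Jmem w.1 S f h i

/-- The model `M` restricted at `r`, with the interpretation of the constant `c`
set to `d ∈ M_r` at every world. -/
noncomputable def Model.restrictSubst {Sig : Signature} (M : Model Sig) (r : M.W) (c : Sig.Const)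
    (d : M.U) (hd : d ∈ M.D r) (hinc : ∀ w u, M.R w u → M.D w ⊆ M.D u) : Model Sig :=
  { M.restrict r with
    I := fun w c' => @ite _ (c' = c) (Classical.propDecidable _) d (M.I w.1 c')
    Imem := by
      intro w c'
      by_cases h : c' = c
      · simp only [h, if_pos rfl]
        rcases w.2 with h' | h'
        · show d ∈ M.D w.1; rw [h']; exact hd
        · exact hinc r w.1 h' hd
      · simp only [h]
        exact M.Imem w.1 c' }

/-! ### Pairs, closure, maximal consistency -/

/-- A pair of sets of formulas (positive and negative part). -/
structure Pair (Sig : Signature) where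
  pos : Set (Formula Sig)
  neg : Set (Formula Sig)

/-- `Γ ⊢ φ`: some finite conjunction of members of `Γ` derives `φ`. -/
def SetDerives {Sig : Signature} (Γ : Set (Formula Sig)) (φ : Formula Sig) : Prop :=
  ∃ (γ : Formula Sig) (l : List (Formula Sig)),
    γ ∈ Γ ∧ (∀ δ ∈ l, δ ∈ Γ) ∧ Derives (l.foldl Formula.and γ) φ

namespace Pair

variable {Sig : Signature}

/-- A pair is consistent if no member of the negative part follows from the positive part. -/
def Consistent (p : Pair Sig) : Prop :=
  ∀ δ ∈ p.neg, ¬ SetDerives p.pos δ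

/-- `q` is a `Φ`-extension of `p`. -/
def Ext (p q : Pair Sig) (Φ : Set (Formula Sig)) : Prop :=
  p.pos ⊆ q.pos ∧ q.pos ⊆ Φ ∧ p.neg ⊆ q.neg ∧ q.neg ⊆ Φ

/-- `Φ`-maximal consistency. -/
def MaxCons (p : Pair Sig) (Φ : Set (Formula Sig)) : Prop :=
  p.Consistent ∧ p.pos ⊆ Φ ∧ p.neg ⊆ Φ ∧
    ∀ q : Pair Sig, p.Ext q Φ → q.Consistent → q = p

/-- A pair is fully witnessed if every negative universal has a constant witness. -/
def FullyWitnessed (p : Pair Sig) : Prop :=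
  ∀ (x : ℕ) (φ : Formula Sig), Formula.all x φ ∈ p.neg →
    ∃ c : Sig.Const, φ.subst x (.const c) ∈ p.neg

end Pair

/-- Closure of a formula under a set of constants. -/
def Cl {Sig : Signature} (C : Set Sig.Const) : Formula Sig → Set (Formula Sig)
  | .top => {.top}
  | .rel S ts => {.rel S ts, .top}
  | .and φ ψ => {.and φ ψ} ∪ Cl C φ ∪ Cl C ψ
  | .dia φ => {.dia φ} ∪ Cl C φ
  | .all x φ => {.all x φ} ∪ ⋃ c ∈ C, Cl C (φ.subst x (.const c))
termination_by φ => φ.size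
decreasing_by
  all_goals simp [Formula.size, Formula.size_subst]
  all_goals omega

/-- Closure of a set of formulas under a set of constants. -/
def ClSet {Sig : Signature} (C : Set Sig.Const) (Γ : Set (Formula Sig)) :
    Set (Formula Sig) :=
  ⋃ φ ∈ Γ, Cl C φ

/-- Modal depth of a set of formulas (as a supremum in ℕ). -/
noncomputable def mdepthSet {Sig : Signature} (Γ : Set (Formula Sig)) : ℕ :=
  sSup (Formula.mdepth '' Γ)

/-- The relation `R̂` between pairs. -/
def hatR {Sig : Signature} (p q : Pair Sig) : Prop :=
  (∀ φ : Formula Sig, Formula.dia φ ∈ p.neg → φ ∈ q.neg ∧ Formula.dia φ ∈ q.neg) ∧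
  (∃ ψ : Formula Sig, Formula.dia ψ ∈ p.pos ∧ Formula.dia ψ ∈ q.neg)

namespace QRCAux

variable {Sig : Signature}

/-- All variables (free or bound) occurring in a term, as a Finset. -/
def Term.varsF : Term Sig → Finset ℕ
  | .var x => {x}
  | .const _ => ∅

/-- All variables (free or bound) occurring in a formula, as a Finset. -/
def Formula.varsF : Formula Sig → Finset ℕ
  | .top => ∅
  | .rel _ ts => Finset.univ.biUnion (fun i => Term.varsF (ts i))
  | .and φ ψ => Formula.varsF φ ∪ Formula.varsF ψ
  | .dia φ => Formula.varsF φ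
  | .all z φ => insert z (Formula.varsF φ)

theorem term_fv_sub_varsF (t : Term Sig) {y : ℕ} (h : y ∉ Term.varsF t) : y ∉ t.fv := by
  cases t with
  | var z => simpa [Term.varsF, Term.fv] using h
  | const c => simp [Term.fv]

theorem fv_sub_varsF (ψ : Formula Sig) {y : ℕ} (h : y ∉ Formula.varsF ψ) : y ∉ ψ.fv := by
  induction ψ with
  | top => simp [Formula.fv]
  | rel S ts =>
      simp only [Formula.varsF, Finset.mem_biUnion, Finset.mem_univ, true_and,
        not_exists] at h
      simp only [Formula.fv, Set.mem_iUnion, not_exists]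
      exact fun i => term_fv_sub_varsF _ (h i)
  | and φ χ ihφ ihχ =>
      simp only [Formula.varsF, Finset.mem_union, not_or] at h
      simp only [Formula.fv, Set.mem_union, not_or]
      exact ⟨ihφ h.1, ihχ h.2⟩
  | dia φ ih => exact ih h
  | all z φ ih =>
      simp only [Formula.varsF, Finset.mem_insert, not_or] at h
      simp only [Formula.fv, Set.mem_diff, not_and]
      intro hy; exact absurd hy (ih h.2)

theorem term_subst_id (t : Term Sig) {x : ℕ} (h : x ∉ t.fv) (u : Term Sig) :
    t.subst x u = t := by
  cases t with
  | var z =>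
      have : z ≠ x := fun e => h (by simp [Term.fv, e])
      simp [Term.subst, this]
  | const c => rfl

/-- L1: substituting for a non-free variable does nothing. -/
theorem subst_id (ψ : Formula Sig) {x : ℕ} (h : x ∉ ψ.fv) (u : Term Sig) :
    ψ.subst x u = ψ := by
  induction ψ with
  | top => rfl
  | rel S ts =>
      simp only [Formula.fv, Set.mem_iUnion, not_exists] at h
      simp only [Formula.subst, Formula.rel.injEq, heq_eq_eq, true_and]
      funext i; exact term_subst_id _ (h i) u
  | and φ χ ihφ ihχ =>
      simp only [Formula.fv, Set.mem_union, not_or] at h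
      simp [Formula.subst, ihφ h.1, ihχ h.2]
  | dia φ ih => simp [Formula.subst, ih h]
  | all z φ ih =>
      by_cases hz : z = x
      · simp [Formula.subst, hz]
      · simp only [Formula.fv, Set.mem_diff, Set.mem_singleton_iff, not_and, not_not] at h
        have hx : x ∉ φ.fv := fun hf => hz ((h hf).symm)
        simp [Formula.subst, hz, ih hx]

/-- L3: substituting a variable for itself does nothing. -/
theorem subst_self (ψ : Formula Sig) (x : ℕ) : ψ.subst x (Term.var x) = ψ := by
  induction ψ with
  | top => rfl
  | rel S ts =>
      simp only [Formula.subst, Formula.rel.injEq, heq_eq_eq, true_and]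
      funext i
      cases ts i with
      | var z => by_cases hz : z = x <;> simp [Term.subst, hz]
      | const c => rfl
  | and φ χ ihφ ihχ => simp [Formula.subst, ihφ, ihχ]
  | dia φ ih => simp [Formula.subst, ih]
  | all z φ ih => by_cases hz : z = x <;> simp [Formula.subst, hz, ih]

/-- L2: composing substitution through a fresh variable. -/
theorem subst_subst (ψ : Formula Sig) {y : ℕ} (h : y ∉ Formula.varsF ψ) (x : ℕ)
    (t : Term Sig) :
    (ψ.subst x (Term.var y)).subst y t = ψ.subst x t := by
  induction ψ with
  | top => rfl
  | rel S ts =>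
      simp only [Formula.varsF, Finset.mem_biUnion, Finset.mem_univ, true_and,
        not_exists] at h
      simp only [Formula.subst, Formula.rel.injEq, heq_eq_eq, true_and]
      funext i
      cases hts : ts i with
      | var z =>
          have hzy : z ≠ y := fun e => by
            have := h i; rw [hts] at this; exact this (by simp [Term.varsF, e])
          by_cases hz : z = x
          · simp [Term.subst, hz]
          · simp [Term.subst, hz, hzy]
      | const c => rfl
  | and φ χ ihφ ihχ =>
      simp only [Formula.varsF, Finset.mem_union, not_or] at h
      simp [Formula.subst, ihφ h.1, ihχ h.2]
  | dia φ ih => simp [Formula.subst, ih h]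
  | all z φ ih =>
      simp only [Formula.varsF, Finset.mem_insert, not_or] at h
      have hzy : z ≠ y := fun e => h.1 e.symm
      by_cases hz : z = x
      · simp only [Formula.subst, if_pos hz, if_neg hzy]
        rw [subst_id φ (fv_sub_varsF φ h.2) t]
      · simp [Formula.subst, hz, hzy, ih h.2]

/-- L4: after substituting away `x`, `x` is no longer free. -/
theorem not_mem_fv_subst (ψ : Formula Sig) {x y : ℕ} (hxy : x ≠ y) :
    x ∉ (ψ.subst x (Term.var y)).fv := by
  induction ψ with
  | top => simp [Formula.subst, Formula.fv]
  | rel S ts =>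
      simp only [Formula.subst, Formula.fv, Set.mem_iUnion, not_exists]
      intro i
      cases ts i with
      | var z =>
          by_cases hz : z = x
          · simpa [Term.subst, hz, Term.fv] using hxy
          · simpa [Term.subst, hz, Term.fv] using fun e => hz e.symm
      | const c => simp [Term.subst, Term.fv]
  | and φ χ ihφ ihχ =>
      simp only [Formula.subst, Formula.fv, Set.mem_union, not_or]
      exact ⟨ihφ, ihχ⟩
  | dia φ ih => exact ih
  | all z φ ih =>
      by_cases hz : z = x
      · subst hz
        simp [Formula.subst, Formula.fv]
      · simp only [Formula.subst, if_neg hz, Formula.fv, Set.mem_diff, not_and]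
        intro hf; exact absurd hf ih

theorem consts_subst_var (ψ : Formula Sig) (x y : ℕ) :
    (ψ.subst x (Term.var y)).consts = ψ.consts := by
  induction ψ with
  | top => rfl
  | rel S ts =>
      simp only [Formula.subst, Formula.consts]
      apply Set.iUnion_congr; intro i
      cases ts i with
      | var z => by_cases hz : z = x <;> simp [Term.subst, hz, Term.consts]
      | const c => rfl
  | and φ χ ihφ ihχ => simp [Formula.subst, Formula.consts, ihφ, ihχ]
  | dia φ ih => simp [Formula.subst, Formula.consts, ih]
  | all z φ ih =>
      by_cases hz : z = x <;> simp [Formula.subst, Formula.consts, hz, ih]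

/-- L7: `var x` is free for `y` in `ψ[x/y]` when `y` is totally fresh. -/
theorem freeFor_back (ψ : Formula Sig) {y : ℕ} (h : y ∉ Formula.varsF ψ) (x : ℕ) :
    (ψ.subst x (Term.var y)).freeFor y (Term.var x) := by
  induction ψ with
  | top => trivial
  | rel S ts => trivial
  | and φ χ ihφ ihχ =>
      simp only [Formula.varsF, Finset.mem_union, not_or] at h
      exact ⟨ihφ h.1, ihχ h.2⟩
  | dia φ ih => exact ih h
  | all z φ ih =>
      simp only [Formula.varsF, Finset.mem_insert, not_or] at h
      by_cases hz : z = x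
      · simp only [Formula.subst, if_pos hz]
        left
        simp only [Formula.fv, Set.mem_diff, not_and]
        intro hf; exact absurd hf (fv_sub_varsF φ h.2)
      · simp only [Formula.subst, if_neg hz]
        right
        refine ⟨?_, ih h.2⟩
        simpa [Term.fv] using hz

end QRCAux

/-- In QRC₁, if φ ⊢ ψ[x/c], x is not free in φ, and the constant c
occurs in neither φ nor ψ, then φ ⊢ ∀xψ. -/
theorem qrc1_const_to_all (Sig : Signature) (φ ψ : Formula Sig) (x : ℕ) (c : Sig.Const)
    (hd : Derives φ (ψ.subst x (Term.const c))) (hx : x ∉ φ.fv)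
    (hc1 : c ∉ φ.consts) (hc2 : c ∉ ψ.consts) :
    Derives φ (Formula.all x ψ) := by
  classical
  obtain ⟨y, hy⟩ := Infinite.exists_notMem_finset
    (QRCAux.Formula.varsF φ ∪ QRCAux.Formula.varsF ψ ∪ {x})
  simp only [Finset.mem_union, Finset.mem_singleton, not_or] at hy
  obtain ⟨⟨hyφ, hyψ⟩, hyx⟩ := hy
  set ψ' : Formula Sig := ψ.subst x (Term.var y) with hψ'
  -- Step 2: φ ⊢ ψ'
  have h2 : Derives φ ψ' := by
    apply Derives.constGen (x := y) (c := c)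
    · rw [QRCAux.subst_id φ (QRCAux.fv_sub_varsF φ hyφ),
        hψ', QRCAux.subst_subst ψ hyψ]
      exact hd
    · exact hc1
    · rw [hψ', QRCAux.consts_subst_var]; exact hc2
  -- Step 3: φ ⊢ ∀y ψ'
  have h3 : Derives φ (Formula.all y ψ') :=
    Derives.allR h2 (QRCAux.fv_sub_varsF φ hyφ)
  -- Step 4: ∀y ψ' ⊢ ψ
  have h4 : Derives (Formula.all y ψ') ψ := by
    apply Derives.allL (t := Term.var x)
    · rw [hψ', QRCAux.subst_subst ψ hyψ, QRCAux.subst_self]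
      exact Derives.refl ψ
    · exact QRCAux.freeFor_back ψ hyψ x
  -- Step 5: ∀y ψ' ⊢ ∀x ψ
  have h5 : Derives (Formula.all y ψ') (Formula.all x ψ) := by
    apply Derives.allR h4
    simp only [Formula.fv, Set.mem_diff, not_and]
    intro hf
    exact absurd hf (QRCAux.not_mem_fv_subst ψ (fun e => hyx e.symm))
  exact Derives.cut h3 h5
end

section
/- The relation R̂ restricted to consistent pairs of QRC₁ formulas is transitive and irreflexive. -/
/-- The relation R̂ restricted to consistent pairs is transitive and
irreflexive. -/
theorem hatR_trans_irrefl (Sig : Signature) :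
    (∀ p q r : Pair Sig, p.Consistent → q.Consistent → r.Consistent →
      hatR p q → hatR q r → hatR p r) ∧
    (∀ p : Pair Sig, p.Consistent → ¬ hatR p p) := by
  constructor
  · rintro p q r _ _ _ ⟨hpq1, ψ, hψpos, hψneg⟩ ⟨hqr1, _⟩
    refine ⟨fun φ hφ => hqr1 φ (hpq1 φ hφ).2, ψ, hψpos, (hqr1 ψ hψneg).2⟩
  · rintro p hp ⟨_, ψ, hpos, hneg⟩
    exact hp _ hneg ⟨_, [], hpos, fun δ h => absurd h (List.not_mem_nil (a := δ)),
      Derives.refl _⟩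
end

section
/- Relational completeness of QRC₁: if the sequent φ ⊢ ψ is not derivable in QRC₁, then there exist an adequate relational model M, a world w of M, and a w-assignment g such that M,w ⊩^g φ and M,w ⊮^g ψ. -/
/-! ### Auxiliary development for the completeness proof -/

namespace QRC1C

variable {Sig : Signature}

/-! #### Finset versions of free and bound variables -/

def tfvF : Term Sig → Finset ℕ
  | .var y => {y}
  | .const _ => ∅

@[simp] lemma mem_tfvF {t : Term Sig} {n : ℕ} : n ∈ tfvF t ↔ n ∈ t.fv := by
  cases t <;> simp [tfvF, Term.fv]

def fvF : Formula Sig → Finset ℕ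
  | .top => ∅
  | .rel _ ts => Finset.univ.biUnion fun i => tfvF (ts i)
  | .and φ ψ => fvF φ ∪ fvF ψ
  | .dia φ => fvF φ
  | .all x φ => (fvF φ).erase x

@[simp] lemma mem_fvF {φ : Formula Sig} {n : ℕ} : n ∈ fvF φ ↔ n ∈ φ.fv := by
  induction φ with
  | top => simp [fvF, Formula.fv]
  | rel S ts => simp [fvF, Formula.fv]
  | and φ ψ ih1 ih2 => simp [fvF, Formula.fv, ih1, ih2]
  | dia φ ih => simp [fvF, Formula.fv, ih]
  | all x φ ih => simp [fvF, Formula.fv, ih, and_comm]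

def bvF : Formula Sig → Finset ℕ
  | .top => ∅
  | .rel _ _ => ∅
  | .and φ ψ => bvF φ ∪ bvF ψ
  | .dia φ => bvF φ
  | .all x φ => insert x (bvF φ)

lemma consts_finite (φ : Formula Sig) : φ.consts.Finite := by
  induction φ with
  | top => simp [Formula.consts, Set.finite_empty]
  | rel S ts =>
      refine Set.finite_iUnion fun i => ?_
      cases h : ts i <;> simp [Term.consts, Set.finite_empty]
  | and φ ψ ih1 ih2 => exact (ih1.union ih2)
  | dia φ ih => exact ih
  | all x φ ih => exact ih

/-! #### Substitution lemmas -/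

lemma tfv_subst {s : Term Sig} {x : ℕ} {t : Term Sig} {n : ℕ}
    (hn : n ∈ (s.subst x t).fv) : (n ∈ s.fv ∧ n ≠ x) ∨ n ∈ t.fv := by
  cases s with
  | var y =>
      by_cases h : y = x
      · simp only [Term.subst, if_pos h] at hn
        exact Or.inr hn
      · simp only [Term.subst, if_neg h, Term.fv, Set.mem_singleton_iff] at hn
        subst hn
        exact Or.inl ⟨rfl, h⟩
  | const c => simp [Term.subst, Term.fv] at hn

lemma fv_subst {φ : Formula Sig} {x : ℕ} {t : Term Sig} {n : ℕ}
    (hn : n ∈ (φ.subst x t).fv) : (n ∈ φ.fv ∧ n ≠ x) ∨ n ∈ t.fv := by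
  induction φ with
  | top => simp [Formula.subst, Formula.fv] at hn
  | rel S ts =>
      simp only [Formula.subst, Formula.fv, Set.mem_iUnion] at hn
      obtain ⟨i, hi⟩ := hn
      rcases tfv_subst hi with ⟨h1, h2⟩ | h
      · exact Or.inl ⟨by simp only [Formula.fv, Set.mem_iUnion]; exact ⟨i, h1⟩, h2⟩
      · exact Or.inr h
  | and φ ψ ih1 ih2 =>
      simp only [Formula.subst, Formula.fv, Set.mem_union] at hn ⊢
      rcases hn with h | h
      · rcases ih1 h with ⟨h1, h2⟩ | h
        · exact Or.inl ⟨Or.inl h1, h2⟩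
        · exact Or.inr h
      · rcases ih2 h with ⟨h1, h2⟩ | h
        · exact Or.inl ⟨Or.inr h1, h2⟩
        · exact Or.inr h
  | dia φ ih => exact ih hn
  | all y φ ih =>
      by_cases h : y = x
      · subst h
        simp only [Formula.subst, if_pos rfl] at hn
        simp only [↓reduceIte, Formula.fv, Set.mem_diff, Set.mem_singleton_iff] at hn
        exact Or.inl ⟨by simp [Formula.fv, hn.1, hn.2], hn.2⟩
      · simp only [Formula.subst, if_neg h, Formula.fv, Set.mem_diff,
          Set.mem_singleton_iff] at hn
        rcases ih hn.1 with ⟨h1, h2⟩ | hh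
        · exact Or.inl ⟨by simp [Formula.fv, h1, hn.2], h2⟩
        · exact Or.inr hh

lemma bvF_subst (φ : Formula Sig) (x : ℕ) (t : Term Sig) :
    bvF (φ.subst x t) = bvF φ := by
  induction φ with
  | top => rfl
  | rel S ts => rfl
  | and φ ψ ih1 ih2 => simp [Formula.subst, bvF, ih1, ih2]
  | dia φ ih => simp [Formula.subst, bvF, ih]
  | all y φ ih =>
      by_cases h : y = x <;> simp [Formula.subst, h, bvF, ih]

lemma consts_subst (φ : Formula Sig) (x : ℕ) (t : Term Sig) :
    (φ.subst x t).consts ⊆ φ.consts ∪ t.consts := by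
  induction φ with
  | top => simp [Formula.subst, Formula.consts]
  | rel S ts =>
      intro c hc
      simp only [Formula.subst, Formula.consts, Set.mem_iUnion] at hc
      obtain ⟨i, hi⟩ := hc
      cases hts : ts i with
      | var y =>
          rw [hts] at hi
          by_cases h : y = x
          · simp [Term.subst, h] at hi
            exact Or.inr hi
          · simp [Term.subst, h, Term.consts] at hi
      | const c' =>
          rw [hts] at hi
          simp [Term.subst, Term.consts] at hi
          subst hi
          exact Or.inl (by simp [Formula.consts]; exact ⟨i, by simp [hts, Term.consts]⟩)
  | and φ ψ ih1 ih2 =>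
      intro c hc
      simp only [Formula.subst, Formula.consts, Set.mem_union] at hc ⊢
      rcases hc with h | h
      · rcases ih1 h with h | h
        · exact Or.inl (Or.inl h)
        · exact Or.inr h
      · rcases ih2 h with h | h
        · exact Or.inl (Or.inr h)
        · exact Or.inr h
  | dia φ ih => simpa [Formula.subst, Formula.consts] using ih
  | all y φ ih =>
      by_cases h : y = x
      · simp [Formula.subst, h, Formula.consts]
      · simpa [Formula.subst, h, Formula.consts] using ih

lemma subst_of_not_mem_fv {φ : Formula Sig} {x : ℕ} (t : Term Sig) (h : x ∉ φ.fv) :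
    φ.subst x t = φ := by
  induction φ with
  | top => rfl
  | rel S ts =>
      simp only [Formula.fv, Set.mem_iUnion, not_exists] at h
      simp only [Formula.subst, Formula.rel.injEq, heq_eq_eq, true_and]
      funext i
      cases hts : ts i with
      | var y =>
          have : x ∉ (Term.var y : Term Sig).fv := by rw [← hts]; exact h i
          simp [Term.fv] at this
          simp [Term.subst, Ne.symm this]
      | const c => simp [Term.subst]
  | and φ ψ ih1 ih2 =>
      simp only [Formula.fv, Set.mem_union, not_or] at h
      simp [Formula.subst, ih1 h.1, ih2 h.2]
  | dia φ ih =>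
      simp only [Formula.fv] at h
      simp [Formula.subst, ih h]
  | all y φ ih =>
      by_cases hxy : y = x
      · simp [Formula.subst, hxy]
      · simp only [Formula.fv, Set.mem_diff, Set.mem_singleton_iff, not_and, not_not] at h
        have : x ∉ φ.fv := fun hx => hxy (h hx).symm
        simp [Formula.subst, hxy, ih this]

lemma subst_var_self (φ : Formula Sig) (x : ℕ) : φ.subst x (.var x) = φ := by
  induction φ with
  | top => rfl
  | rel S ts =>
      simp only [Formula.subst, Formula.rel.injEq, heq_eq_eq, true_and]
      funext i
      cases ts i with
      | var y => by_cases h : y = x <;> simp [Term.subst, h]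
      | const c => simp [Term.subst]
  | and φ ψ ih1 ih2 => simp [Formula.subst, ih1, ih2]
  | dia φ ih => simp [Formula.subst, ih]
  | all y φ ih => by_cases h : y = x <;> simp [Formula.subst, h, ih]

lemma freeFor_const (φ : Formula Sig) (x : ℕ) (c : Sig.Const) :
    φ.freeFor x (.const c) := by
  induction φ with
  | top => trivial
  | rel S ts => trivial
  | and φ ψ ih1 ih2 => exact ⟨ih1, ih2⟩
  | dia φ ih => exact ih
  | all y φ ih => exact Or.inr ⟨by simp [Term.fv], ih⟩

lemma freeFor_var_of_not_bv {φ : Formula Sig} {y : ℕ} (h : y ∉ bvF φ) (x : ℕ) :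
    φ.freeFor x (.var y) := by
  induction φ with
  | top => trivial
  | rel S ts => trivial
  | and φ ψ ih1 ih2 =>
      simp only [bvF, Finset.mem_union, not_or] at h
      exact ⟨ih1 h.1, ih2 h.2⟩
  | dia φ ih => exact ih h
  | all z φ ih =>
      simp only [bvF, Finset.mem_insert, not_or] at h
      exact Or.inr ⟨by simp [Term.fv]; exact fun hz => h.1 hz.symm, ih h.2⟩

lemma subst_subst {φ : Formula Sig} {x z : ℕ} (t : Term Sig)
    (hfv : z ∉ φ.fv) (hbv : z ∉ bvF φ) (hzx : z ≠ x) :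
    (φ.subst x (.var z)).subst z t = φ.subst x t := by
  induction φ with
  | top => rfl
  | rel S ts =>
      simp only [Formula.subst, Formula.rel.injEq, heq_eq_eq, true_and]
      funext i
      cases hts : ts i with
      | var y =>
          by_cases h : y = x
          · simp [Term.subst, h]
          · have hyz : y ≠ z := by
              intro hh
              apply hfv
              simp only [Formula.fv, Set.mem_iUnion]
              exact ⟨i, by simp [hts, Term.fv, hh]⟩
            simp [Term.subst, h, hyz]
      | const c => simp [Term.subst]
  | and φ ψ ih1 ih2 =>
      simp only [Formula.fv, Set.mem_union, not_or] at hfv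
      simp only [bvF, Finset.mem_union, not_or] at hbv
      simp [Formula.subst, ih1 hfv.1 hbv.1, ih2 hfv.2 hbv.2]
  | dia φ ih =>
      simp only [Formula.fv] at hfv
      simp [Formula.subst, ih hfv hbv]
  | all y φ ih =>
      simp only [bvF, Finset.mem_insert, not_or] at hbv
      have hzy : z ≠ y := hbv.1
      have hfv' : z ∉ φ.fv := by
        intro hz
        exact hfv (by simp [Formula.fv, hz, hzy])
      by_cases h : y = x
      · subst h
        simp only [Formula.subst, if_pos rfl]
        have : y ≠ z := fun hh => hzy hh.symm
        simp [Formula.subst, if_neg this, subst_of_not_mem_fv t hfv']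
      · simp only [Formula.subst, if_neg h, if_neg hzy.symm]
        simp [Formula.subst, if_neg h, ih hfv' hbv.2]

lemma freeFor_back {φ : Formula Sig} {x z : ℕ} (hfv : z ∉ φ.fv) (hbv : z ∉ bvF φ) :
    (φ.subst x (.var z)).freeFor z (.var x) := by
  induction φ with
  | top => trivial
  | rel S ts => trivial
  | and φ ψ ih1 ih2 =>
      simp only [Formula.fv, Set.mem_union, not_or] at hfv
      simp only [bvF, Finset.mem_union, not_or] at hbv
      exact ⟨ih1 hfv.1 hbv.1, ih2 hfv.2 hbv.2⟩
  | dia φ ih => exact ih hfv hbv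
  | all y φ ih =>
      simp only [bvF, Finset.mem_insert, not_or] at hbv
      have hzy : z ≠ y := hbv.1
      have hfv' : z ∉ φ.fv := fun hz => hfv (by simp [Formula.fv, hz, hzy])
      by_cases h : y = x
      · subst h
        simp only [Formula.subst, if_pos rfl]
        refine Or.inl ?_
        simp only [Formula.fv, Set.mem_diff, Set.mem_singleton_iff]
        intro ⟨h1, _⟩; exact hfv' h1
      · simp only [Formula.subst, if_neg h]
        refine Or.inr ⟨by simp [Term.fv]; exact fun hh => h hh, ih hfv' hbv.2⟩

/-! #### Conjunction and `SetDerives` machinery -/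

def Conj (γ : Formula Sig) (l : List (Formula Sig)) : Formula Sig := l.foldl .and γ

lemma derives_conj_self : ∀ (l : List (Formula Sig)) (γ : Formula Sig),
    Derives (Conj γ l) γ
  | [], γ => .refl γ
  | a :: l, γ => (derives_conj_self l (γ.and a)).cut (.andE₁ _ _)

lemma derives_conj_mem {δ : Formula Sig} :
    ∀ (l : List (Formula Sig)) (γ : Formula Sig), δ ∈ l → Derives (Conj γ l) δ
  | a :: l, γ, h => by
      rcases List.mem_cons.mp h with h | h
      · subst h; exact (derives_conj_self l (γ.and δ)).cut (.andE₂ _ _)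
      · exact derives_conj_mem l (γ.and a) h

lemma derives_conj_of {X : Formula Sig} : ∀ (l : List (Formula Sig)) (γ : Formula Sig),
    Derives X γ → (∀ δ ∈ l, Derives X δ) → Derives X (Conj γ l)
  | [], _, hγ, _ => hγ
  | a :: l, γ, hγ, hl =>
      derives_conj_of l (γ.and a) (hγ.andI (hl a (by simp)))
        (fun δ hδ => hl δ (by simp [hδ]))

lemma not_mem_fv_conj {z : ℕ} : ∀ (l : List (Formula Sig)) (γ : Formula Sig),
    z ∉ γ.fv → (∀ δ ∈ l, z ∉ δ.fv) → z ∉ (Conj γ l).fv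
  | [], _, hγ, _ => hγ
  | a :: l, γ, hγ, hl =>
      not_mem_fv_conj l (γ.and a)
        (by simp only [Formula.fv, Set.mem_union]; rintro (h | h)
            · exact hγ h
            · exact hl a (by simp) h)
        (fun δ hδ => hl δ (by simp [hδ]))

lemma setDerives_of_mem {Γ : Set (Formula Sig)} {δ : Formula Sig} (h : δ ∈ Γ) :
    SetDerives Γ δ := ⟨δ, [], h, by simp, .refl δ⟩

lemma setDerives_post {Γ : Set (Formula Sig)} {δ χ : Formula Sig}
    (h : SetDerives Γ δ) (hd : Derives δ χ) : SetDerives Γ χ := by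
  obtain ⟨γ, l, h1, h2, h3⟩ := h
  exact ⟨γ, l, h1, h2, h3.cut hd⟩

lemma derives_of_setDerives {Γ : Set (Formula Sig)} {δ β : Formula Sig}
    (h : SetDerives Γ δ) (hβ : ∀ χ ∈ Γ, Derives β χ) : Derives β δ := by
  obtain ⟨γ, l, h1, h2, h3⟩ := h
  exact (derives_conj_of l γ (hβ _ h1) fun δ' hδ' => hβ _ (h2 _ hδ')).cut h3

lemma derives_of_setDerives_singleton {φ δ : Formula Sig}
    (h : SetDerives {φ} δ) : Derives φ δ :=
  derives_of_setDerives h (fun χ hχ => by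
    rw [Set.mem_singleton_iff] at hχ; subst hχ; exact .refl _)

lemma setDerives_and {Γ : Set (Formula Sig)} {A B : Formula Sig}
    (hA : SetDerives Γ A) (hB : SetDerives Γ B) : SetDerives Γ (A.and B) := by
  obtain ⟨γ1, l1, m1, m1', d1⟩ := hA
  obtain ⟨γ2, l2, m2, m2', d2⟩ := hB
  refine ⟨γ1, l1 ++ γ2 :: l2, m1, ?_, ?_⟩
  · intro δ hδ
    rcases List.mem_append.mp hδ with h | h
    · exact m1' δ h
    · rcases List.mem_cons.mp h with h | h
      · subst h; exact m2
      · exact m2' δ h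
  · refine Derives.andI ?_ ?_
    · exact (derives_conj_of _ _ (derives_conj_self _ _)
        (fun δ hδ => derives_conj_mem _ _ (by simp [hδ]))).cut d1
    · exact (derives_conj_of _ _ (derives_conj_mem _ _ (by simp))
        (fun δ hδ => derives_conj_mem _ _ (by simp [hδ]))).cut d2

lemma setDerives_conj {Γ : Set (Formula Sig)} :
    ∀ (l : List (Formula Sig)) (γ : Formula Sig), SetDerives Γ γ →
      (∀ δ ∈ l, SetDerives Γ δ) → SetDerives Γ (Conj γ l)
  | [], _, hγ, _ => hγ
  | a :: l, γ, hγ, hl =>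
      setDerives_conj l (γ.and a) (setDerives_and hγ (hl a (by simp)))
        (fun δ hδ => hl δ (by simp [hδ]))

lemma setDerives_cut {Γ Γ' : Set (Formula Sig)} {δ : Formula Sig}
    (hall : ∀ χ ∈ Γ', SetDerives Γ χ) (h : SetDerives Γ' δ) : SetDerives Γ δ := by
  obtain ⟨γ, l, h1, h2, h3⟩ := h
  exact setDerives_post (setDerives_conj l γ (hall _ h1) fun δ' hδ' => hall _ (h2 _ hδ')) h3

/-! #### Fresh variables and generalization -/

def fresh (s : Finset ℕ) : ℕ := s.sup id + 1

lemma fresh_not_mem (s : Finset ℕ) : fresh s ∉ s := by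
  intro h
  have := Finset.le_sup (f := id) h
  simp only [id] at this
  simp only [fresh] at this
  omega

lemma derives_all_of_fresh {γ θ : Formula Sig} {x z : ℕ}
    (hzγ : z ∉ γ.fv) (hzθ : z ∉ θ.fv) (hzb : z ∉ bvF θ) (hzx : z ≠ x)
    (hd : Derives γ (θ.subst x (.var z))) : Derives γ (.all x θ) := by
  have h1 : Derives γ (.all z (θ.subst x (.var z))) := hd.allR hzγ
  have h2 : Derives (.all z (θ.subst x (.var z))) θ := by
    have hcomp := subst_subst (φ := θ) (x := x) (z := z) (.var x) hzθ hzb hzx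
    rw [subst_var_self] at hcomp
    exact Derives.allL (by rw [hcomp]; exact .refl θ) (freeFor_back hzθ hzb)
  have h3 : x ∉ (Formula.all z (θ.subst x (.var z))).fv := by
    simp only [Formula.fv, Set.mem_diff, Set.mem_singleton_iff, not_and, not_not]
    intro hx
    rcases fv_subst hx with ⟨_, hne⟩ | hh
    · exact absurd rfl hne
    · simp only [Term.fv, Set.mem_singleton_iff] at hh
      exact hh
  exact h1.cut (h2.allR h3)

lemma setDerives_all_of_fresh {Γ : Set (Formula Sig)} {θ : Formula Sig} {x z : ℕ}
    (hΓ : ∀ χ ∈ Γ, z ∉ χ.fv) (hzθ : z ∉ θ.fv) (hzb : z ∉ bvF θ) (hzx : z ≠ x)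
    (h : SetDerives Γ (θ.subst x (.var z))) : SetDerives Γ (.all x θ) := by
  obtain ⟨γ, l, h1, h2, h3⟩ := h
  refine ⟨γ, l, h1, h2, derives_all_of_fresh ?_ hzθ hzb hzx h3⟩
  exact not_mem_fv_conj l γ (hΓ _ h1) (fun δ hδ => hΓ _ (h2 _ hδ))

lemma derives_all_inst {θ : Formula Sig} {x : ℕ} {t : Term Sig}
    (hff : θ.freeFor x t) : Derives (.all x θ) (θ.subst x t) :=
  Derives.allL (.refl _) hff

/-! #### General semantic lemmas -/

section Semantics

variable {M : Model Sig}

lemma tval_mem {w : M.W} {g : ℕ → M.U} (hg : M.IsAssignment w g) (t : Term Sig) :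
    M.tval w g t ∈ M.D w := by
  cases t with
  | var y => exact hg y
  | const c => exact M.Imem w c

lemma tval_congr {w : M.W} {g h : ℕ → M.U} {t : Term Sig}
    (hfv : ∀ n ∈ t.fv, g n = h n) : M.tval w g t = M.tval w h t := by
  cases t with
  | var y => exact hfv y (by simp [Term.fv])
  | const c => rfl

lemma forces_congr_mp (hinc : ∀ w u, M.R w u → M.D w ⊆ M.D u) {χ : Formula Sig} :
    ∀ {w : M.W} {g g' : ℕ → M.U}, M.IsAssignment w g → M.IsAssignment w g' →
    (∀ n ∈ χ.fv, g n = g' n) → M.Forces w g χ → M.Forces w g' χ := by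
  induction χ with
  | top => intro w g g' _ _ _ _; trivial
  | rel S ts =>
      intro w g g' hg hg' hfv hf
      have heq : (fun i => M.tval w g' (ts i)) = fun i => M.tval w g (ts i) := by
        funext i
        refine (tval_congr ?_).symm
        intro n hn
        exact hfv n (by simp only [Formula.fv, Set.mem_iUnion]; exact ⟨i, hn⟩)
      show (fun i => M.tval w g' (ts i)) ∈ M.J w S
      rw [heq]; exact hf
  | and α β ih1 ih2 =>
      intro w g g' hg hg' hfv hf
      have hfv1 : ∀ n ∈ α.fv, g n = g' n := fun n hn =>
        hfv n (by simp [Formula.fv, hn])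
      have hfv2 : ∀ n ∈ β.fv, g n = g' n := fun n hn =>
        hfv n (by simp [Formula.fv, hn])
      exact ⟨ih1 hg hg' hfv1 hf.1, ih2 hg hg' hfv2 hf.2⟩
  | dia α ih =>
      intro w g g' hg hg' hfv hf
      obtain ⟨v, hR, hfv'⟩ := hf
      exact ⟨v, hR, ih (fun n => hinc _ _ hR (hg n)) (fun n => hinc _ _ hR (hg' n)) hfv hfv'⟩
  | all x θ ih =>
      intro w g g' hg hg' hfv H
      intro h hh halt
      have h2 : M.IsAssignment w (Function.update g x (h x)) := by
        intro n
        rcases eq_or_ne n x with rfl | hne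
        · simpa using hh n
        · simpa [Function.update, hne] using hg n
      have halt2 : AltOn {x} g (Function.update g x (h x)) := by
        intro y hy
        simp only [Set.mem_singleton_iff] at hy
        simp [Function.update, hy]
      have hf2 := H _ h2 halt2
      refine ih h2 hh ?_ hf2
      intro n hn
      rcases eq_or_ne n x with rfl | hne
      · simp [Function.update]
      · have hn' : n ∈ (Formula.all x θ).fv := by
          simp [Formula.fv, hn, hne]
        have := hfv n hn'
        rw [Function.update_of_ne hne]
        rw [this]
        exact halt n (by simp [hne])

lemma forces_congr (hinc : ∀ w u, M.R w u → M.D w ⊆ M.D u) {χ : Formula Sig}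
    {w : M.W} {g g' : ℕ → M.U} (hg : M.IsAssignment w g) (hg' : M.IsAssignment w g')
    (hfv : ∀ n ∈ χ.fv, g n = g' n) : M.Forces w g χ ↔ M.Forces w g' χ :=
  ⟨forces_congr_mp hinc hg hg' hfv,
   forces_congr_mp hinc hg' hg (fun n hn => (hfv n hn).symm)⟩

lemma tval_subst {w : M.W} {g : ℕ → M.U} (s : Term Sig) (x : ℕ) (t : Term Sig) :
    M.tval w g (s.subst x t) = M.tval w (Function.update g x (M.tval w g t)) s := by
  cases s with
  | var y =>
      by_cases h : y = x
      · subst h; simp [Term.subst, Model.tval, Function.update]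
      · simp [Term.subst, h, Model.tval, Function.update]
  | const c => simp [Term.subst, Model.tval]

lemma forces_subst (hinc : ∀ w u, M.R w u → M.D w ⊆ M.D u)
    (hconc : ∀ w u, M.R w u → ∀ c, M.I w c = M.I u c) {χ : Formula Sig} :
    ∀ {w : M.W} {g : ℕ → M.U} {x : ℕ} {t : Term Sig}, χ.freeFor x t →
      M.IsAssignment w g →
      (M.Forces w g (χ.subst x t) ↔
        M.Forces w (Function.update g x (M.tval w g t)) χ) := by
  induction χ with
  | top => intro w g x t _ _; simp [Formula.subst, Model.Forces]
  | rel S ts =>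
      intro w g x t _ _
      show (fun i => M.tval w g ((ts i).subst x t)) ∈ M.J w S ↔ _
      have : (fun i => M.tval w g ((ts i).subst x t)) =
          fun i => M.tval w (Function.update g x (M.tval w g t)) (ts i) := by
        funext i; exact tval_subst (ts i) x t
      rw [this]
      exact Iff.rfl
  | and α β ih1 ih2 =>
      intro w g x t hff hg
      exact and_congr (ih1 hff.1 hg) (ih2 hff.2 hg)
  | dia α ih =>
      intro w g x t hff hg
      show (∃ v, M.R w v ∧ M.Forces v g (α.subst x t)) ↔
        ∃ v, M.R w v ∧ M.Forces v (Function.update g x (M.tval w g t)) α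
      constructor
      · rintro ⟨v, hR, hf⟩
        refine ⟨v, hR, ?_⟩
        have hgv : M.IsAssignment v g := fun n => hinc _ _ hR (hg n)
        have := (ih hff hgv).mp hf
        have heq : M.tval v g t = M.tval w g t := by
          cases t with
          | var y => rfl
          | const c => exact (hconc _ _ hR c).symm
        rwa [heq] at this
      · rintro ⟨v, hR, hf⟩
        refine ⟨v, hR, ?_⟩
        have hgv : M.IsAssignment v g := fun n => hinc _ _ hR (hg n)
        have heq : M.tval v g t = M.tval w g t := by
          cases t with
          | var y => rfl
          | const c => exact (hconc _ _ hR c).symm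
        refine (ih hff hgv).mpr ?_
        rwa [heq]
  | all y θ ih =>
      intro w g x t hff hg
      have hval : M.tval w g t ∈ M.D w := tval_mem hg t
      have hupdasg : M.IsAssignment w (Function.update g x (M.tval w g t)) := by
        intro n
        rcases eq_or_ne n x with rfl | hne
        · simpa using hval
        · simpa [Function.update, hne] using hg n
      by_cases hxy : y = x
      · subst hxy
        rw [show (Formula.all y θ).subst y t = Formula.all y θ by
          simp [Formula.subst]]
        refine forces_congr hinc hg hupdasg ?_
        intro n hn
        have hny : n ≠ y := by
          simp only [Formula.fv, Set.mem_diff, Set.mem_singleton_iff] at hn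
          exact hn.2
        simp [Function.update, hny]
      · rcases hff with hnfv | ⟨hyt, hffθ⟩
        · rw [subst_of_not_mem_fv t hnfv]
          refine forces_congr hinc hg hupdasg ?_
          intro n hn
          have hnx : n ≠ x := fun hh => hnfv (hh ▸ hn)
          simp [Function.update, hnx]
        · rw [show (Formula.all y θ).subst x t = Formula.all y (θ.subst x t) from by
            simp [Formula.subst, hxy]]
          show (∀ h, M.IsAssignment w h → AltOn {y} g h → M.Forces w h (θ.subst x t)) ↔
            (∀ h, M.IsAssignment w h →
              AltOn {y} (Function.update g x (M.tval w g t)) h → M.Forces w h θ)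
          have htv : ∀ h : ℕ → M.U, AltOn {y} g h → M.tval w h t = M.tval w g t := by
            intro h halt
            refine tval_congr ?_
            intro n hn
            have hny : n ≠ y := by
              intro hh; subst hh; exact hyt hn
            exact (halt n (by simp [hny])).symm
          constructor
          · intro H h' hh' halt'
            set hmid := Function.update h' x (g x) with hdef
            have hmidasg : M.IsAssignment w hmid := by
              intro n
              rcases eq_or_ne n x with rfl | hne
              · simpa [hdef, Function.update] using hg n
              · simpa [hdef, Function.update, hne] using hh' n
            have haltmid : AltOn {y} g hmid := by
              intro n hny
              simp only [Set.mem_singleton_iff] at hny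
              rcases eq_or_ne n x with rfl | hne
              · simp [hdef, Function.update]
              · rw [hdef, Function.update_of_ne hne]
                have := halt' n (by simp [hny])
                rw [← this, Function.update_of_ne hne]
            have hf := H hmid hmidasg haltmid
            have := (ih hffθ hmidasg).mp hf
            have heqfun : Function.update hmid x (M.tval w hmid t) = h' := by
              funext n
              rcases eq_or_ne n x with rfl | hne
              · rw [Function.update_self]
                rw [htv hmid haltmid]
                have := halt' n (by
                  simp only [Set.mem_singleton_iff]
                  exact fun hh => hxy hh.symm)
                rw [← this, Function.update_self]
              · rw [Function.update_of_ne hne, hdef, Function.update_of_ne hne]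
            rw [heqfun] at this
            exact this
          · intro H h hh halt
            refine (ih hffθ hh).mpr ?_
            have htvh : M.tval w h t = M.tval w g t := htv h halt
            rw [htvh]
            set h' := Function.update h x (M.tval w g t) with hdef
            have h'asg : M.IsAssignment w h' := by
              intro n
              rcases eq_or_ne n x with rfl | hne
              · simpa [hdef, Function.update] using hval
              · simpa [hdef, Function.update, hne] using hh n
            refine H h' h'asg ?_
            intro n hny
            simp only [Set.mem_singleton_iff] at hny
            rcases eq_or_ne n x with rfl | hne
            · rw [hdef, Function.update_self, Function.update_self]
            · rw [hdef, Function.update_of_ne hne, Function.update_of_ne hne]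
              exact halt n (by simp [hny])

end Semantics

/-! #### Size positivity -/

lemma size_pos (φ : Formula Sig) : 1 ≤ φ.size := by
  cases φ <;> simp [Formula.size]

/-! #### Positive closure -/

inductive InstCl (P : Set (Formula Sig)) (T : Set (Term Sig)) : Formula Sig → Prop
  | base {χ} : χ ∈ P → InstCl P T χ
  | left {α β} : InstCl P T (.and α β) → InstCl P T α
  | right {α β} : InstCl P T (.and α β) → InstCl P T β
  | inst {x θ t} : InstCl P T (.all x θ) → t ∈ T → InstCl P T (θ.subst x t)

def TmOk (B : Finset ℕ) (t : Term Sig) : Prop :=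
  (∃ c, t = .const c) ∨ ∃ y, t = .var y ∧ y ∉ B

lemma instCl_bv {P : Set (Formula Sig)} {T : Set (Term Sig)} {B : Finset ℕ}
    (hP : ∀ χ ∈ P, bvF χ ⊆ B) : ∀ {χ}, InstCl P T χ → bvF χ ⊆ B := by
  intro χ h
  induction h with
  | base h => exact hP _ h
  | left _ ih => exact fun n hn => ih (by simp [bvF, hn])
  | right _ ih => exact fun n hn => ih (by simp [bvF, hn])
  | inst _ _ ih =>
      rw [bvF_subst]
      exact fun n hn => ih (by simp [bvF, hn])

lemma instCl_setDerives {P : Set (Formula Sig)} {T : Set (Term Sig)} {B : Finset ℕ}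
    (hP : ∀ χ ∈ P, bvF χ ⊆ B) (hT : ∀ t ∈ T, TmOk B t) :
    ∀ {χ}, InstCl P T χ → SetDerives P χ := by
  intro χ h
  induction h with
  | base h => exact setDerives_of_mem h
  | left _ ih => exact setDerives_post ih (.andE₁ _ _)
  | right _ ih => exact setDerives_post ih (.andE₂ _ _)
  | @inst x θ t hall ht ih =>
      refine setDerives_post ih (derives_all_inst ?_)
      rcases hT t ht with ⟨c, rfl⟩ | ⟨y, rfl, hy⟩
      · exact freeFor_const θ x c
      · refine freeFor_var_of_not_bv ?_ x
        intro hyb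
        exact hy (instCl_bv hP hall (by simp [bvF, hyb]))

lemma instCl_fv {P : Set (Formula Sig)} {T : Set (Term Sig)} {V : Finset ℕ}
    (hP : ∀ χ ∈ P, ∀ n ∈ fvF χ, n ∈ V) (hT : ∀ t ∈ T, ∀ n ∈ tfvF t, n ∈ V) :
    ∀ {χ}, InstCl P T χ → ∀ n ∈ fvF χ, n ∈ V := by
  intro χ h
  induction h with
  | base h => exact hP _ h
  | left _ ih => exact fun n hn => ih n (by simp [fvF, hn])
  | right _ ih => exact fun n hn => ih n (by simp [fvF, hn])
  | @inst x θ t _ ht ih =>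
      intro n hn
      rcases fv_subst (mem_fvF.mp hn) with ⟨h1, h2⟩ | hh
      · exact ih n (by simp only [fvF, Finset.mem_erase]; exact ⟨h2, mem_fvF.mpr h1⟩)
      · exact hT t ht n (mem_tfvF.mpr hh)

lemma instCl_consts {P : Set (Formula Sig)} {T : Set (Term Sig)} {C : Set Sig.Const}
    (hP : ∀ χ ∈ P, χ.consts ⊆ C) (hT : ∀ t ∈ T, t.consts ⊆ C) :
    ∀ {χ}, InstCl P T χ → χ.consts ⊆ C := by
  intro χ h
  induction h with
  | base h => exact hP _ h
  | left _ ih => exact fun c hc => ih (by simp [Formula.consts, hc])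
  | right _ ih => exact fun c hc => ih (by simp [Formula.consts, hc])
  | @inst x θ t _ ht ih =>
      intro c hc
      rcases consts_subst θ x t hc with h | h
      · exact ih h
      · exact hT t ht h

/-! #### Negative saturation -/

open scoped Classical in
noncomputable def satNeg (P : Set (Formula Sig)) :
    ℕ → Formula Sig → Finset ℕ → List (Formula Sig) × Finset ℕ
  | 0, δ, _ => ([δ], ∅)
  | f + 1, δ, A =>
    match δ with
    | .and α β =>
        if SetDerives P α then
          ((Formula.and α β) :: (satNeg P f β A).1, (satNeg P f β A).2)
        else ((Formula.and α β) :: (satNeg P f α A).1, (satNeg P f α A).2)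
    | .all x θ =>
        ((Formula.all x θ) ::
            (satNeg P f (θ.subst x (.var (fresh A))) (insert (fresh A) A)).1,
          insert (fresh A)
            (satNeg P f (θ.subst x (.var (fresh A))) (insert (fresh A) A)).2)
    | δ => ([δ], ∅)

lemma satNeg_self (P : Set (Formula Sig)) :
    ∀ (f : ℕ) (δ : Formula Sig) (A : Finset ℕ), δ ∈ (satNeg P f δ A).1 := by
  intro f δ A
  cases f with
  | zero => simp [satNeg]
  | succ f =>
      cases δ with
      | and α β =>
          simp only [satNeg]
          split <;> simp
      | all x θ => simp [satNeg]
      | top => simp [satNeg]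
      | rel S ts => simp [satNeg]
      | dia θ => simp [satNeg]

lemma satNeg_params (P : Set (Formula Sig)) :
    ∀ (f : ℕ) (δ : Formula Sig) (A : Finset ℕ) (z : ℕ),
      z ∈ (satNeg P f δ A).2 → z ∉ A := by
  intro f
  induction f with
  | zero => intro δ A z hz; simp [satNeg] at hz
  | succ f ih =>
      intro δ A z hz
      cases δ with
      | and α β =>
          simp only [satNeg] at hz
          split at hz <;> exact ih _ _ _ hz
      | all x θ =>
          simp only [satNeg, Finset.mem_insert] at hz
          rcases hz with rfl | hz
          · exact fresh_not_mem A
          · intro hA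
            exact ih _ _ _ hz (Finset.mem_insert_of_mem hA)
      | top => simp [satNeg] at hz
      | rel S ts => simp [satNeg] at hz
      | dia θ => simp [satNeg] at hz

lemma satNeg_fv (P : Set (Formula Sig)) :
    ∀ (f : ℕ) (δ : Formula Sig) (A : Finset ℕ),
      ∀ χ ∈ (satNeg P f δ A).1, ∀ n ∈ fvF χ,
        n ∈ fvF δ ∨ n ∈ (satNeg P f δ A).2 := by
  intro f
  induction f with
  | zero =>
      intro δ A χ hχ n hn
      simp only [satNeg, List.mem_singleton] at hχ
      subst hχ; exact Or.inl hn
  | succ f ih =>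
      intro δ A χ hχ n hn
      cases δ with
      | and α β =>
          simp only [satNeg] at hχ ⊢
          split at hχ <;> rename_i hsd <;>
            rcases List.mem_cons.mp hχ with rfl | hχ
          · exact Or.inl hn
          · rcases ih _ _ _ hχ n hn with h | h
            · exact Or.inl (by simp only [fvF, Finset.mem_union]; exact Or.inr h)
            · rw [if_pos hsd]
              exact Or.inr h
          · exact Or.inl hn
          · rcases ih _ _ _ hχ n hn with h | h
            · exact Or.inl (by simp only [fvF, Finset.mem_union]; exact Or.inl h)
            · rw [if_neg hsd]
              exact Or.inr h
      | all x θ =>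
          simp only [satNeg] at hχ ⊢
          rcases List.mem_cons.mp hχ with rfl | hχ
          · exact Or.inl hn
          · rcases ih _ _ _ hχ n hn with h | h
            · rcases fv_subst (mem_fvF.mp h) with ⟨h1, h2⟩ | hh
              · exact Or.inl (by
                  simp only [fvF, Finset.mem_erase]
                  exact ⟨h2, mem_fvF.mpr h1⟩)
              · simp only [Term.fv, Set.mem_singleton_iff] at hh
                subst hh
                exact Or.inr (Finset.mem_insert_self _ _)
            · exact Or.inr (Finset.mem_insert_of_mem h)
      | top =>
          simp only [satNeg, List.mem_singleton] at hχ
          subst hχ; exact Or.inl hn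
      | rel S ts =>
          simp only [satNeg, List.mem_singleton] at hχ
          subst hχ; exact Or.inl hn
      | dia θ =>
          simp only [satNeg, List.mem_singleton] at hχ
          subst hχ; exact Or.inl hn

lemma satNeg_bv (P : Set (Formula Sig)) :
    ∀ (f : ℕ) (δ : Formula Sig) (A : Finset ℕ),
      ∀ χ ∈ (satNeg P f δ A).1, bvF χ ⊆ bvF δ := by
  intro f
  induction f with
  | zero =>
      intro δ A χ hχ
      simp only [satNeg, List.mem_singleton] at hχ
      subst hχ; exact fun _ h => h
  | succ f ih =>
      intro δ A χ hχ
      cases δ with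
      | and α β =>
          simp only [satNeg] at hχ
          split at hχ <;> rcases List.mem_cons.mp hχ with rfl | hχ
          · exact fun _ h => h
          · exact fun n hn => by simp only [bvF, Finset.mem_union]; exact Or.inr (ih _ _ _ hχ hn)
          · exact fun _ h => h
          · exact fun n hn => by simp only [bvF, Finset.mem_union]; exact Or.inl (ih _ _ _ hχ hn)
      | all x θ =>
          simp only [satNeg] at hχ
          rcases List.mem_cons.mp hχ with rfl | hχ
          · exact fun _ h => h
          · intro n hn
            have := ih _ _ _ hχ hn
            rw [bvF_subst] at this
            simp only [bvF, Finset.mem_insert]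
            exact Or.inr this
      | top =>
          simp only [satNeg, List.mem_singleton] at hχ
          subst hχ; exact fun _ h => h
      | rel S ts =>
          simp only [satNeg, List.mem_singleton] at hχ
          subst hχ; exact fun _ h => h
      | dia θ =>
          simp only [satNeg, List.mem_singleton] at hχ
          subst hχ; exact fun _ h => h

lemma satNeg_consts (P : Set (Formula Sig)) :
    ∀ (f : ℕ) (δ : Formula Sig) (A : Finset ℕ),
      ∀ χ ∈ (satNeg P f δ A).1, χ.consts ⊆ δ.consts := by
  intro f
  induction f with
  | zero =>
      intro δ A χ hχ
      simp only [satNeg, List.mem_singleton] at hχ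
      subst hχ; exact fun _ h => h
  | succ f ih =>
      intro δ A χ hχ
      cases δ with
      | and α β =>
          simp only [satNeg] at hχ
          split at hχ <;> rcases List.mem_cons.mp hχ with rfl | hχ
          · exact fun _ h => h
          · exact fun c hc => by
              have := ih _ _ _ hχ hc
              simp only [Formula.consts, Set.mem_union]
              exact Or.inr this
          · exact fun _ h => h
          · exact fun c hc => by
              have := ih _ _ _ hχ hc
              simp only [Formula.consts, Set.mem_union]
              exact Or.inl this
      | all x θ =>
          simp only [satNeg] at hχ
          rcases List.mem_cons.mp hχ with rfl | hχ
          · exact fun _ h => h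
          · intro c hc
            have := ih _ _ _ hχ hc
            rcases consts_subst θ x _ this with h | h
            · exact h
            · simp [Term.consts] at h
      | top =>
          simp only [satNeg, List.mem_singleton] at hχ
          subst hχ; exact fun _ h => h
      | rel S ts =>
          simp only [satNeg, List.mem_singleton] at hχ
          subst hχ; exact fun _ h => h
      | dia θ =>
          simp only [satNeg, List.mem_singleton] at hχ
          subst hχ; exact fun _ h => h

lemma satNeg_consistent (P : Set (Formula Sig)) :
    ∀ (f : ℕ) (δ : Formula Sig) (A : Finset ℕ),
      (∀ χ ∈ P, ∀ n ∈ fvF χ, n ∈ A) → (∀ n ∈ fvF δ, n ∈ A) → bvF δ ⊆ A →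
      ¬ SetDerives P δ → ∀ χ ∈ (satNeg P f δ A).1, ¬ SetDerives P χ := by
  intro f
  induction f with
  | zero =>
      intro δ A _ _ _ hδ χ hχ
      simp only [satNeg, List.mem_singleton] at hχ
      subst hχ; exact hδ
  | succ f ih =>
      intro δ A hP hfv hbv hδ χ hχ
      cases δ with
      | and α β =>
          simp only [satNeg] at hχ
          split at hχ <;> rename_i hsd <;>
            rcases List.mem_cons.mp hχ with rfl | hχ
          · exact hδ
          · refine ih β A hP (fun n hn => hfv n ?_) (fun n hn => hbv ?_) ?_ χ hχ
            · simp only [fvF, Finset.mem_union]; exact Or.inr hn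
            · simp only [bvF, Finset.mem_union]; exact Or.inr hn
            · intro hb; exact hδ (setDerives_and hsd hb)
          · exact hδ
          · refine ih α A hP (fun n hn => hfv n ?_) (fun n hn => hbv ?_) hsd χ hχ
            · simp only [fvF, Finset.mem_union]; exact Or.inl hn
            · simp only [bvF, Finset.mem_union]; exact Or.inl hn
      | all x θ =>
          simp only [satNeg] at hχ
          rcases List.mem_cons.mp hχ with rfl | hχ
          · exact hδ
          · have hzA : fresh A ∉ A := fresh_not_mem A
            have hxA : x ∈ A := hbv (by simp [bvF])
            have hzx : fresh A ≠ x := fun hh => hzA (hh ▸ hxA)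
            have hzθfv : fresh A ∉ θ.fv := by
              intro hzf
              exact hzA (hfv _ (by
                simp only [fvF, Finset.mem_erase]
                exact ⟨hzx, mem_fvF.mpr hzf⟩))
            have hzθbv : fresh A ∉ bvF θ := fun hzb =>
              hzA (hbv (by simp only [bvF, Finset.mem_insert]; exact Or.inr hzb))
            refine ih _ _ (fun χ' hχ' n hn => Finset.mem_insert_of_mem (hP χ' hχ' n hn))
              ?_ ?_ ?_ χ hχ
            · intro n hn
              rcases fv_subst (mem_fvF.mp hn) with ⟨h1, h2⟩ | hh
              · exact Finset.mem_insert_of_mem (hfv n (by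
                  simp only [fvF, Finset.mem_erase]
                  exact ⟨h2, mem_fvF.mpr h1⟩))
              · simp only [Term.fv, Set.mem_singleton_iff] at hh
                subst hh
                exact Finset.mem_insert_self _ _
            · rw [bvF_subst]
              intro n hn
              exact Finset.mem_insert_of_mem (hbv (by
                simp only [bvF, Finset.mem_insert]; exact Or.inr hn))
            · intro hsd
              refine hδ (setDerives_all_of_fresh ?_ hzθfv hzθbv hzx hsd)
              intro χ' hχ' hzf
              exact hzA (hP χ' hχ' _ (mem_fvF.mpr hzf))
      | top =>
          simp only [satNeg, List.mem_singleton] at hχ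
          subst hχ; exact hδ
      | rel S ts =>
          simp only [satNeg, List.mem_singleton] at hχ
          subst hχ; exact hδ
      | dia θ =>
          simp only [satNeg, List.mem_singleton] at hχ
          subst hχ; exact hδ

lemma satNeg_S4 (P : Set (Formula Sig)) :
    ∀ (f : ℕ) (δ : Formula Sig) (A : Finset ℕ), δ.size ≤ f →
      ∀ α β, Formula.and α β ∈ (satNeg P f δ A).1 →
        α ∈ (satNeg P f δ A).1 ∨ β ∈ (satNeg P f δ A).1 := by
  intro f
  induction f with
  | zero =>
      intro δ A hs
      have := size_pos δ
      omega
  | succ f ih =>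
      intro δ A hs α β hχ
      cases δ with
      | and a b =>
          simp only [satNeg] at hχ ⊢
          have hsa := size_pos a
          have hsb := size_pos b
          simp only [Formula.size] at hs
          split at hχ <;> rename_i hsd <;>
            rcases List.mem_cons.mp hχ with heq | hχ
          · obtain ⟨rfl, rfl⟩ : α = a ∧ β = b := by
              injection heq with h1 h2
              exact ⟨h1, h2⟩
            rw [if_pos hsd]
            exact Or.inr (List.mem_cons_of_mem _ (satNeg_self P f _ _))
          · rw [if_pos hsd]
            rcases ih b A (by omega) α β hχ with h | h
            · exact Or.inl (List.mem_cons_of_mem _ h)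
            · exact Or.inr (List.mem_cons_of_mem _ h)
          · obtain ⟨rfl, rfl⟩ : α = a ∧ β = b := by
              injection heq with h1 h2
              exact ⟨h1, h2⟩
            rw [if_neg hsd]
            exact Or.inl (List.mem_cons_of_mem _ (satNeg_self P f _ _))
          · rw [if_neg hsd]
            rcases ih a A (by omega) α β hχ with h | h
            · exact Or.inl (List.mem_cons_of_mem _ h)
            · exact Or.inr (List.mem_cons_of_mem _ h)
      | all x θ =>
          simp only [satNeg] at hχ ⊢
          rcases List.mem_cons.mp hχ with heq | hχ
          · exact absurd heq (by simp)
          · have : (θ.subst x (.var (fresh A))).size ≤ f := by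
              rw [Formula.size_subst]
              simp only [Formula.size] at hs
              omega
            rcases ih _ _ this α β hχ with h | h
            · exact Or.inl (List.mem_cons_of_mem _ h)
            · exact Or.inr (List.mem_cons_of_mem _ h)
      | top =>
          simp only [satNeg, List.mem_singleton] at hχ
          exact absurd hχ (by simp)
      | rel S ts =>
          simp only [satNeg, List.mem_singleton] at hχ
          exact absurd hχ (by simp)
      | dia θ =>
          simp only [satNeg, List.mem_singleton] at hχ
          exact absurd hχ (by simp)

lemma satNeg_S2 (P : Set (Formula Sig)) :
    ∀ (f : ℕ) (δ : Formula Sig) (A : Finset ℕ), δ.size ≤ f →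
      ∀ x θ, Formula.all x θ ∈ (satNeg P f δ A).1 →
        ∃ z, z ∉ A ∧ z ∈ (satNeg P f δ A).2 ∧
          θ.subst x (.var z) ∈ (satNeg P f δ A).1 := by
  intro f
  induction f with
  | zero =>
      intro δ A hs
      have := size_pos δ
      omega
  | succ f ih =>
      intro δ A hs x θ hχ
      cases δ with
      | and a b =>
          simp only [satNeg] at hχ ⊢
          have hsa := size_pos a
          have hsb := size_pos b
          simp only [Formula.size] at hs
          split at hχ <;> rename_i hsd <;>
            rcases List.mem_cons.mp hχ with heq | hχ
          · exact absurd heq (by simp)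
          · rw [if_pos hsd]
            obtain ⟨z, hz1, hz2, hz3⟩ := ih b A (by omega) x θ hχ
            exact ⟨z, hz1, hz2, List.mem_cons_of_mem _ hz3⟩
          · exact absurd heq (by simp)
          · rw [if_neg hsd]
            obtain ⟨z, hz1, hz2, hz3⟩ := ih a A (by omega) x θ hχ
            exact ⟨z, hz1, hz2, List.mem_cons_of_mem _ hz3⟩
      | all x' θ' =>
          simp only [satNeg] at hχ ⊢
          rcases List.mem_cons.mp hχ with heq | hχ
          · obtain ⟨rfl, rfl⟩ : x = x' ∧ θ = θ' := by
              injection heq with h1 h2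
              exact ⟨h1, h2⟩
            refine ⟨fresh A, fresh_not_mem A, Finset.mem_insert_self _ _, ?_⟩
            exact List.mem_cons_of_mem _ (satNeg_self P f _ _)
          · have : (θ'.subst x' (.var (fresh A))).size ≤ f := by
              rw [Formula.size_subst]
              simp only [Formula.size] at hs
              omega
            obtain ⟨z, hz1, hz2, hz3⟩ := ih _ _ this x θ hχ
            refine ⟨z, fun hzA => hz1 (Finset.mem_insert_of_mem hzA),
              Finset.mem_insert_of_mem hz2, List.mem_cons_of_mem _ hz3⟩
      | top =>
          simp only [satNeg, List.mem_singleton] at hχ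
          exact absurd hχ (by simp)
      | rel S ts =>
          simp only [satNeg, List.mem_singleton] at hχ
          exact absurd hχ (by simp)
      | dia θ' =>
          simp only [satNeg, List.mem_singleton] at hχ
          exact absurd hχ (by simp)

/-! #### Saturation of a list of negatives -/

noncomputable def satNegs (P : Set (Formula Sig)) :
    List (Formula Sig) → Finset ℕ → List (Formula Sig) × Finset ℕ
  | [], _ => ([], ∅)
  | δ :: ls, A =>
      ((satNeg P δ.size δ A).1 ++
          (satNegs P ls (A ∪ (satNeg P δ.size δ A).2)).1,
        (satNeg P δ.size δ A).2 ∪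
          (satNegs P ls (A ∪ (satNeg P δ.size δ A).2)).2)

lemma satNegs_mem (P : Set (Formula Sig)) :
    ∀ (ls : List (Formula Sig)) (A : Finset ℕ) (δ : Formula Sig), δ ∈ ls →
      δ ∈ (satNegs P ls A).1 := by
  intro ls
  induction ls with
  | nil => intro A δ h; simp at h
  | cons a ls ih =>
      intro A δ h
      rcases List.mem_cons.mp h with rfl | h
      · exact List.mem_append.mpr (Or.inl (satNeg_self P _ _ _))
      · exact List.mem_append.mpr (Or.inr (ih _ δ h))

lemma satNegs_params (P : Set (Formula Sig)) :
    ∀ (ls : List (Formula Sig)) (A : Finset ℕ) (z : ℕ),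
      z ∈ (satNegs P ls A).2 → z ∉ A := by
  intro ls
  induction ls with
  | nil => intro A z h; simp [satNegs] at h
  | cons a ls ih =>
      intro A z h
      rcases Finset.mem_union.mp h with h | h
      · exact satNeg_params P _ _ _ _ h
      · intro hA
        exact ih _ z h (Finset.mem_union_left _ hA)

lemma satNegs_fv (P : Set (Formula Sig)) {W : Finset ℕ} :
    ∀ (ls : List (Formula Sig)) (A : Finset ℕ),
      (∀ δ ∈ ls, ∀ n ∈ fvF δ, n ∈ W) →
      ∀ χ ∈ (satNegs P ls A).1, ∀ n ∈ fvF χ, n ∈ W ∨ n ∈ (satNegs P ls A).2 := by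
  intro ls
  induction ls with
  | nil => intro A _ χ hχ; simp [satNegs] at hχ
  | cons a ls ih =>
      intro A hls χ hχ n hn
      rcases List.mem_append.mp hχ with h | h
      · rcases satNeg_fv P _ _ _ χ h n hn with h' | h'
        · exact Or.inl (hls a (by simp) n h')
        · exact Or.inr (Finset.mem_union_left _ h')
      · have hls' : ∀ δ ∈ ls, ∀ n ∈ fvF δ, n ∈ W :=
          fun δ hδ n hn => hls δ (by simp [hδ]) n hn
        rcases ih _ hls' χ h n hn with h' | h'
        · exact Or.inl h'
        · exact Or.inr (Finset.mem_union_right _ h')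

lemma satNegs_bv (P : Set (Formula Sig)) {B : Finset ℕ} :
    ∀ (ls : List (Formula Sig)) (A : Finset ℕ),
      (∀ δ ∈ ls, bvF δ ⊆ B) → ∀ χ ∈ (satNegs P ls A).1, bvF χ ⊆ B := by
  intro ls
  induction ls with
  | nil => intro A _ χ hχ; simp [satNegs] at hχ
  | cons a ls ih =>
      intro A hls χ hχ
      rcases List.mem_append.mp hχ with h | h
      · exact fun n hn => hls a (by simp) (satNeg_bv P _ _ _ χ h hn)
      · exact ih _ (fun δ hδ => hls δ (by simp [hδ])) χ h

lemma satNegs_consts (P : Set (Formula Sig)) {C : Set Sig.Const} :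
    ∀ (ls : List (Formula Sig)) (A : Finset ℕ),
      (∀ δ ∈ ls, δ.consts ⊆ C) → ∀ χ ∈ (satNegs P ls A).1, χ.consts ⊆ C := by
  intro ls
  induction ls with
  | nil => intro A _ χ hχ; simp [satNegs] at hχ
  | cons a ls ih =>
      intro A hls χ hχ
      rcases List.mem_append.mp hχ with h | h
      · exact fun c hc => hls a (by simp) (satNeg_consts P _ _ _ χ h hc)
      · exact ih _ (fun δ hδ => hls δ (by simp [hδ])) χ h

lemma satNegs_consistent (P : Set (Formula Sig)) :
    ∀ (ls : List (Formula Sig)) (A : Finset ℕ),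
      (∀ χ ∈ P, ∀ n ∈ fvF χ, n ∈ A) →
      (∀ δ ∈ ls, ¬ SetDerives P δ ∧ (∀ n ∈ fvF δ, n ∈ A) ∧ bvF δ ⊆ A) →
      ∀ χ ∈ (satNegs P ls A).1, ¬ SetDerives P χ := by
  intro ls
  induction ls with
  | nil => intro A _ _ χ hχ; simp [satNegs] at hχ
  | cons a ls ih =>
      intro A hP hls χ hχ
      rcases List.mem_append.mp hχ with h | h
      · obtain ⟨h1, h2, h3⟩ := hls a (by simp)
        exact satNeg_consistent P _ _ _ hP h2 h3 h1 χ h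
      · refine ih _ (fun χ' hχ' n hn => Finset.mem_union_left _ (hP χ' hχ' n hn))
          (fun δ hδ => ?_) χ h
        obtain ⟨h1, h2, h3⟩ := hls δ (by simp [hδ])
        exact ⟨h1, fun n hn => Finset.mem_union_left _ (h2 n hn),
          fun n hn => Finset.mem_union_left _ (h3 hn)⟩

lemma satNegs_S4 (P : Set (Formula Sig)) :
    ∀ (ls : List (Formula Sig)) (A : Finset ℕ) (α β : Formula Sig),
      Formula.and α β ∈ (satNegs P ls A).1 →
      α ∈ (satNegs P ls A).1 ∨ β ∈ (satNegs P ls A).1 := by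
  intro ls
  induction ls with
  | nil => intro A α β h; simp [satNegs] at h
  | cons a ls ih =>
      intro A α β h
      rcases List.mem_append.mp h with h | h
      · rcases satNeg_S4 P _ _ _ (le_refl _) α β h with h' | h'
        · exact Or.inl (List.mem_append.mpr (Or.inl h'))
        · exact Or.inr (List.mem_append.mpr (Or.inl h'))
      · rcases ih _ α β h with h' | h'
        · exact Or.inl (List.mem_append.mpr (Or.inr h'))
        · exact Or.inr (List.mem_append.mpr (Or.inr h'))

lemma satNegs_S2 (P : Set (Formula Sig)) :
    ∀ (ls : List (Formula Sig)) (A : Finset ℕ) (x : ℕ) (θ : Formula Sig),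
      Formula.all x θ ∈ (satNegs P ls A).1 →
      ∃ z, z ∉ A ∧ z ∈ (satNegs P ls A).2 ∧
        θ.subst x (.var z) ∈ (satNegs P ls A).1 := by
  intro ls
  induction ls with
  | nil => intro A x θ h; simp [satNegs] at h
  | cons a ls ih =>
      intro A x θ h
      rcases List.mem_append.mp h with h | h
      · obtain ⟨z, hz1, hz2, hz3⟩ := satNeg_S2 P _ _ _ (le_refl _) x θ h
        exact ⟨z, hz1, Finset.mem_union_left _ hz2,
          List.mem_append.mpr (Or.inl hz3)⟩
      · obtain ⟨z, hz1, hz2, hz3⟩ := ih _ x θ h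
        exact ⟨z, fun hzA => hz1 (Finset.mem_union_left _ hzA),
          Finset.mem_union_right _ hz2, List.mem_append.mpr (Or.inr hz3)⟩

/-! #### The canonical construction -/

section Construction

variable (φ0 ψ0 : Formula Sig)

def Bb : Finset ℕ := bvF φ0 ∪ bvF ψ0

def C0 : Set Sig.Const := φ0.consts ∪ ψ0.consts

noncomputable def zd : ℕ := fresh (Bb φ0 ψ0 ∪ fvF φ0 ∪ fvF ψ0)

noncomputable def V0 : Finset ℕ := insert (zd φ0 ψ0) (fvF φ0 ∪ fvF ψ0)

noncomputable def A0 : Finset ℕ := Bb φ0 ψ0 ∪ V0 φ0 ψ0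

def TmOf (V : Finset ℕ) : Set (Term Sig) :=
  {t | (∃ y ∈ V, t = .var y) ∨ ∃ c ∈ C0 φ0 ψ0, t = .const c}

def fvL : List (Formula Sig) → Finset ℕ
  | [] => ∅
  | δ :: ls => fvF δ ∪ fvL ls

def bvL : List (Formula Sig) → Finset ℕ
  | [] => ∅
  | δ :: ls => bvF δ ∪ bvL ls

lemma fvL_subset {δ : Formula Sig} : ∀ {ls : List (Formula Sig)}, δ ∈ ls →
    fvF δ ⊆ fvL ls := by
  intro ls h
  induction ls with
  | nil => simp at h
  | cons a ls ih =>
      rcases List.mem_cons.mp h with rfl | h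
      · exact fun n hn => by simp only [fvL, Finset.mem_union]; exact Or.inl hn
      · exact fun n hn => by
          simp only [fvL, Finset.mem_union]; exact Or.inr (ih h hn)

lemma bvL_subset {δ : Formula Sig} : ∀ {ls : List (Formula Sig)}, δ ∈ ls →
    bvF δ ⊆ bvL ls := by
  intro ls h
  induction ls with
  | nil => simp at h
  | cons a ls ih =>
      rcases List.mem_cons.mp h with rfl | h
      · exact fun n hn => by simp only [bvL, Finset.mem_union]; exact Or.inl hn
      · exact fun n hn => by
          simp only [bvL, Finset.mem_union]; exact Or.inr (ih h hn)

def stripObl : List (Formula Sig) → List (Formula Sig)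
  | [] => []
  | (Formula.dia θ) :: ls => θ :: Formula.dia θ :: stripObl ls
  | _ :: ls => stripObl ls

lemma stripObl_mem {θ : Formula Sig} : ∀ {ls : List (Formula Sig)},
    Formula.dia θ ∈ ls → θ ∈ stripObl ls ∧ Formula.dia θ ∈ stripObl ls := by
  intro ls h
  induction ls with
  | nil => simp at h
  | cons a ls ih =>
      rcases List.mem_cons.mp h with heq | h
      · rw [← heq]
        exact ⟨by simp [stripObl], by simp [stripObl]⟩
      · have := ih h
        cases a with
        | dia θ' =>
            exact ⟨by simp [stripObl, this.1], by simp [stripObl, this.2]⟩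
        | top => exact this
        | rel S ts => exact this
        | and α β => exact this
        | all x θ' => exact this

lemma stripObl_src {χ : Formula Sig} : ∀ {ls : List (Formula Sig)},
    χ ∈ stripObl ls → ∃ θ, Formula.dia θ ∈ ls ∧ (χ = θ ∨ χ = Formula.dia θ) := by
  intro ls h
  induction ls with
  | nil => simp [stripObl] at h
  | cons a ls ih =>
      cases a with
      | dia θ' =>
          simp only [stripObl] at h
          rcases List.mem_cons.mp h with rfl | h
          · exact ⟨χ, by simp, Or.inl rfl⟩
          · rcases List.mem_cons.mp h with rfl | h
            · exact ⟨θ', by simp, Or.inr rfl⟩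
            · obtain ⟨θ, h1, h2⟩ := ih h
              exact ⟨θ, by simp [h1], h2⟩
      | top =>
          obtain ⟨θ, h1, h2⟩ := ih h
          exact ⟨θ, by simp [h1], h2⟩
      | rel S ts =>
          obtain ⟨θ, h1, h2⟩ := ih h
          exact ⟨θ, by simp [h1], h2⟩
      | and α β =>
          obtain ⟨θ, h1, h2⟩ := ih h
          exact ⟨θ, by simp [h1], h2⟩
      | all x θ' =>
          obtain ⟨θ, h1, h2⟩ := ih h
          exact ⟨θ, by simp [h1], h2⟩

structure WD (Sig : Signature) where
  P : Set (Formula Sig)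
  N : List (Formula Sig)
  V : Finset ℕ

noncomputable def pairOf : List (Formula Sig) → WD Sig
  | [] =>
      let r := satNegs {φ0} [ψ0] (A0 φ0 ψ0)
      ⟨InstCl {φ0} (TmOf φ0 ψ0 (V0 φ0 ψ0 ∪ r.2)), r.1, V0 φ0 ψ0 ∪ r.2⟩
  | α :: l =>
      let d := pairOf l
      let obls := stripObl d.N
      let A := d.V ∪ Bb φ0 ψ0 ∪ fvF α ∪ bvF α ∪ fvL obls ∪ bvL obls
      let r := satNegs {α} obls A
      ⟨InstCl {α} (TmOf φ0 ψ0 (d.V ∪ r.2)), r.1, d.V ∪ r.2⟩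

def Valid : List (Formula Sig) → Prop
  | [] => True
  | α :: l => Valid l ∧ Formula.dia α ∈ (pairOf φ0 ψ0 l).P

lemma P_left {α β : Formula Sig} : ∀ l : List (Formula Sig),
    Formula.and α β ∈ (pairOf φ0 ψ0 l).P → α ∈ (pairOf φ0 ψ0 l).P
  | [] => fun h => InstCl.left h
  | γ :: l => fun h => InstCl.left h

lemma P_right {α β : Formula Sig} : ∀ l : List (Formula Sig),
    Formula.and α β ∈ (pairOf φ0 ψ0 l).P → β ∈ (pairOf φ0 ψ0 l).P
  | [] => fun h => InstCl.right h
  | γ :: l => fun h => InstCl.right h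

lemma P_inst {x : ℕ} {θ : Formula Sig} {t : Term Sig} : ∀ l : List (Formula Sig),
    Formula.all x θ ∈ (pairOf φ0 ψ0 l).P →
    t ∈ TmOf φ0 ψ0 (pairOf φ0 ψ0 l).V → θ.subst x t ∈ (pairOf φ0 ψ0 l).P
  | [] => fun h ht => InstCl.inst h ht
  | γ :: l => fun h ht => InstCl.inst h ht


lemma V_mono_cons (α : Formula Sig) (l : List (Formula Sig)) :
    (pairOf φ0 ψ0 l).V ⊆ (pairOf φ0 ψ0 (α :: l)).V := by
  intro n hn
  simp only [pairOf, Finset.mem_union]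
  exact Or.inl hn

lemma V_mono_append (l : List (Formula Sig)) :
    ∀ a : List (Formula Sig), (pairOf φ0 ψ0 l).V ⊆ (pairOf φ0 ψ0 (a ++ l)).V := by
  intro a
  induction a with
  | nil => exact fun _ h => h
  | cons α a ih => exact ih.trans (V_mono_cons φ0 ψ0 α (a ++ l))

lemma dia_prop (θ : Formula Sig) :
    ∀ (a l : List (Formula Sig)), Formula.dia θ ∈ (pairOf φ0 ψ0 l).N →
      Formula.dia θ ∈ (pairOf φ0 ψ0 (a ++ l)).N ∧
        (a ≠ [] → θ ∈ (pairOf φ0 ψ0 (a ++ l)).N) := by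
  intro a
  induction a with
  | nil => exact fun l h => ⟨h, fun hne => absurd rfl hne⟩
  | cons α a ih =>
      intro l h
      have h' := (ih l h).1
      have hstrip := stripObl_mem h'
      constructor
      · exact satNegs_mem _ _ _ _ hstrip.2
      · intro _
        exact satNegs_mem _ _ _ _ hstrip.1

end Construction

section Invariant

variable (φ0 ψ0 : Formula Sig)

structure GoodW (d : WD Sig) : Prop where
  consis : ∀ δ ∈ d.N, ¬ SetDerives d.P δ
  posFv : ∀ χ ∈ d.P, ∀ n ∈ fvF χ, n ∈ d.V
  posBv : ∀ χ ∈ d.P, bvF χ ⊆ Bb φ0 ψ0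
  posC : ∀ χ ∈ d.P, χ.consts ⊆ C0 φ0 ψ0
  negFv : ∀ χ ∈ d.N, ∀ n ∈ fvF χ, n ∈ d.V
  negBv : ∀ χ ∈ d.N, bvF χ ⊆ Bb φ0 ψ0
  negC : ∀ χ ∈ d.N, χ.consts ⊆ C0 φ0 ψ0
  VBb : ∀ z ∈ d.V, z ∉ Bb φ0 ψ0
  zdV : zd φ0 ψ0 ∈ d.V
  S2 : ∀ x θ, Formula.all x θ ∈ d.N →
    ∃ z, z ∉ Bb φ0 ψ0 ∧ z ∈ d.V ∧ θ.subst x (.var z) ∈ d.N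
  S4 : ∀ α β, Formula.and α β ∈ d.N → α ∈ d.N ∨ β ∈ d.N
  seed : ∃ γ, γ ∈ d.P

variable (hfree : ∀ x, x ∈ fvF φ0 ∪ fvF ψ0 → x ∉ Bb φ0 ψ0)
variable (hcons : ¬ Derives φ0 ψ0)

lemma zd_not_Bb : zd φ0 ψ0 ∉ Bb φ0 ψ0 := by
  intro h
  exact fresh_not_mem _ (Finset.mem_union_left _ (Finset.mem_union_left _ h))

lemma tmOk_of_V {V : Finset ℕ} (hV : ∀ z ∈ V, z ∉ Bb φ0 ψ0) :
    ∀ t ∈ TmOf φ0 ψ0 V, TmOk (Bb φ0 ψ0) t := by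
  rintro t (⟨y, hy, rfl⟩ | ⟨c, _, rfl⟩)
  · exact Or.inr ⟨y, rfl, hV y hy⟩
  · exact Or.inl ⟨c, rfl⟩

lemma tmOf_fv {V : Finset ℕ} :
    ∀ t ∈ TmOf φ0 ψ0 V, ∀ n ∈ tfvF t, n ∈ V := by
  rintro t (⟨y, hy, rfl⟩ | ⟨c, _, rfl⟩) n hn
  · simp only [tfvF, Finset.mem_singleton] at hn
    exact hn ▸ hy
  · simp [tfvF] at hn

lemma tmOf_consts {V : Finset ℕ} :
    ∀ t ∈ TmOf φ0 ψ0 V, t.consts ⊆ C0 φ0 ψ0 := by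
  rintro t (⟨y, hy, rfl⟩ | ⟨c, hc, rfl⟩)
  · simp [Term.consts]
  · intro c' hc'
    simp only [Term.consts, Set.mem_singleton_iff] at hc'
    exact hc' ▸ hc

include hfree hcons in
lemma goodW : ∀ l : List (Formula Sig), Valid φ0 ψ0 l → GoodW φ0 ψ0 (pairOf φ0 ψ0 l) := by
  intro l
  induction l with
  | nil =>
      intro _
      set r := satNegs ({φ0} : Set (Formula Sig)) [ψ0] (A0 φ0 ψ0) with hr
      have hVBb : ∀ z ∈ V0 φ0 ψ0 ∪ r.2, z ∉ Bb φ0 ψ0 := by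
        intro z hz
        rcases Finset.mem_union.mp hz with hz | hz
        · rcases Finset.mem_insert.mp hz with rfl | hz
          · exact zd_not_Bb φ0 ψ0
          · exact hfree z hz
        · intro hB
          exact satNegs_params _ _ _ _ hz (by
            simp only [A0, Finset.mem_union]
            exact Or.inl hB)
      have hφfv : ∀ χ ∈ ({φ0} : Set (Formula Sig)), ∀ n ∈ fvF χ, n ∈ A0 φ0 ψ0 := by
        intro χ hχ n hn
        rw [Set.mem_singleton_iff] at hχ; subst hχ
        simp only [A0, V0, Finset.mem_union, Finset.mem_insert]
        exact Or.inr (Or.inr (Or.inl hn))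
      have hφbv : ∀ χ ∈ ({φ0} : Set (Formula Sig)), bvF χ ⊆ Bb φ0 ψ0 := by
        intro χ hχ
        rw [Set.mem_singleton_iff] at hχ; subst hχ
        exact fun n hn => by simp only [Bb, Finset.mem_union]; exact Or.inl hn
      have hnocons : ¬ SetDerives {φ0} ψ0 := fun hsd =>
        hcons (derives_of_setDerives_singleton hsd)
      have hlsOK : ∀ δ ∈ [ψ0], ¬ SetDerives ({φ0} : Set (Formula Sig)) δ ∧
          (∀ n ∈ fvF δ, n ∈ A0 φ0 ψ0) ∧ bvF δ ⊆ A0 φ0 ψ0 := by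
        intro δ hδ
        simp only [List.mem_singleton] at hδ; subst hδ
        refine ⟨hnocons, fun n hn => ?_, fun n hn => ?_⟩
        · simp only [A0, V0, Finset.mem_union, Finset.mem_insert]
          exact Or.inr (Or.inr (Or.inr hn))
        · simp only [A0, Bb, Finset.mem_union]
          exact Or.inl (Or.inr hn)
      have hNconsis : ∀ δ ∈ r.1, ¬ SetDerives {φ0} δ :=
        satNegs_consistent _ _ _ hφfv hlsOK
      have hPder : ∀ χ ∈ (pairOf φ0 ψ0 []).P, SetDerives {φ0} χ := by
        intro χ hχ
        exact instCl_setDerives hφbv (tmOk_of_V φ0 ψ0 hVBb) hχ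
      refine ⟨?_, ?_, ?_, ?_, ?_, ?_, ?_, hVBb, ?_, ?_, ?_, ?_⟩
      · intro δ hδ hsd
        exact hNconsis δ hδ (setDerives_cut hPder hsd)
      · intro χ hχ
        refine instCl_fv ?_ (tmOf_fv φ0 ψ0) hχ
        intro χ' hχ' n hn
        rw [Set.mem_singleton_iff] at hχ'; subst hχ'
        exact Finset.mem_union_left _ (by
          simp only [V0, Finset.mem_insert]
          exact Or.inr (Finset.mem_union_left _ hn))
      · intro χ hχ
        exact instCl_bv hφbv hχ
      · intro χ hχ
        refine instCl_consts ?_ (tmOf_consts φ0 ψ0) hχ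
        intro χ' hχ'
        rw [Set.mem_singleton_iff] at hχ'; subst hχ'
        exact fun c hc => by simp only [C0, Set.mem_union]; exact Or.inl hc
      · intro χ hχ n hn
        have hW : ∀ δ ∈ [ψ0], ∀ n ∈ fvF δ, n ∈ V0 φ0 ψ0 := by
          intro δ hδ n hn
          simp only [List.mem_singleton] at hδ; subst hδ
          simp only [V0, Finset.mem_insert]
          exact Or.inr (Finset.mem_union_right _ hn)
        rcases satNegs_fv _ _ _ hW χ hχ n hn with h | h
        · exact Finset.mem_union_left _ h
        · exact Finset.mem_union_right _ h
      · intro χ hχ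
        refine satNegs_bv _ _ _ ?_ χ hχ
        intro δ hδ
        simp only [List.mem_singleton] at hδ; subst hδ
        exact fun n hn => by simp only [Bb, Finset.mem_union]; exact Or.inr hn
      · intro χ hχ
        refine satNegs_consts _ _ _ ?_ χ hχ
        intro δ hδ
        simp only [List.mem_singleton] at hδ; subst hδ
        exact fun c hc => by simp only [C0, Set.mem_union]; exact Or.inr hc
      · exact Finset.mem_union_left _ (Finset.mem_insert_self _ _)
      · intro x θ hθ
        obtain ⟨z, hz1, hz2, hz3⟩ := satNegs_S2 _ _ _ x θ hθ
        refine ⟨z, fun hB => hz1 (by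
          simp only [A0, Finset.mem_union]
          exact Or.inl hB), Finset.mem_union_right _ hz2, hz3⟩
      · exact fun α β h => satNegs_S4 _ _ _ α β h
      · exact ⟨φ0, InstCl.base rfl⟩
  | cons α l ih =>
      intro hv
      obtain ⟨hv', hα⟩ := hv
      have good := ih hv'
      set d := pairOf φ0 ψ0 l with hd
      set obls := stripObl d.N with hobls
      set A := d.V ∪ Bb φ0 ψ0 ∪ fvF α ∪ bvF α ∪ fvL obls ∪ bvL obls with hA
      set r := satNegs ({α} : Set (Formula Sig)) obls A with hr
      have hαfv : ∀ n ∈ fvF α, n ∈ d.V := good.posFv (Formula.dia α) hα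
      have hαbv : bvF α ⊆ Bb φ0 ψ0 := good.posBv (Formula.dia α) hα
      have hαC : α.consts ⊆ C0 φ0 ψ0 := good.posC (Formula.dia α) hα
      have hoblsrc : ∀ δ ∈ obls, (∀ n ∈ fvF δ, n ∈ d.V) ∧ bvF δ ⊆ Bb φ0 ψ0 ∧
          δ.consts ⊆ C0 φ0 ψ0 ∧ ¬ SetDerives ({α} : Set (Formula Sig)) δ := by
        intro δ hδ
        obtain ⟨θ, hθ, hcases⟩ := stripObl_src hδ
        have hdia := good.consis _ hθ
        have hfvθ : ∀ n ∈ fvF θ, n ∈ d.V := good.negFv (Formula.dia θ) hθ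
        have hbvθ : bvF θ ⊆ Bb φ0 ψ0 := good.negBv (Formula.dia θ) hθ
        have hCθ : θ.consts ⊆ C0 φ0 ψ0 := good.negC (Formula.dia θ) hθ
        have hder : ∀ χ, Derives α χ → Formula.dia χ = Formula.dia θ →
            False := by
          intro χ hχ heq
          injection heq with heq
          subst heq
          exact hdia (setDerives_post (setDerives_of_mem hα) (Derives.nec hχ))
        rcases hcases with rfl | rfl
        · refine ⟨hfvθ, hbvθ, hCθ, ?_⟩
          intro hsd
          exact hder δ (derives_of_setDerives_singleton hsd) rfl
        · refine ⟨hfvθ, hbvθ, hCθ, ?_⟩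
          intro hsd
          have hda : Derives α (Formula.dia θ) := derives_of_setDerives_singleton hsd
          have : Derives (Formula.dia α) (Formula.dia θ) :=
            (Derives.nec hda).cut (.diaTrans θ)
          exact hdia (setDerives_post (setDerives_of_mem hα) this)
      have hVBb : ∀ z ∈ d.V ∪ r.2, z ∉ Bb φ0 ψ0 := by
        intro z hz
        rcases Finset.mem_union.mp hz with hz | hz
        · exact good.VBb z hz
        · intro hB
          exact satNegs_params _ _ _ _ hz (by
            simp only [hA, Finset.mem_union]
            exact Or.inl (Or.inl (Or.inl (Or.inl (Or.inr hB)))))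
      have hαfvA : ∀ χ ∈ ({α} : Set (Formula Sig)), ∀ n ∈ fvF χ, n ∈ A := by
        intro χ hχ n hn
        rw [Set.mem_singleton_iff] at hχ; subst hχ
        simp only [hA, Finset.mem_union]
        exact Or.inl (Or.inl (Or.inl (Or.inr hn)))
      have hαbvB : ∀ χ ∈ ({α} : Set (Formula Sig)), bvF χ ⊆ Bb φ0 ψ0 := by
        intro χ hχ
        rw [Set.mem_singleton_iff] at hχ; subst hχ
        exact hαbv
      have hlsOK : ∀ δ ∈ obls, ¬ SetDerives ({α} : Set (Formula Sig)) δ ∧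
          (∀ n ∈ fvF δ, n ∈ A) ∧ bvF δ ⊆ A := by
        intro δ hδ
        obtain ⟨h1, h2, h3, h4⟩ := hoblsrc δ hδ
        refine ⟨h4, fun n hn => ?_, fun n hn => ?_⟩
        · simp only [hA, Finset.mem_union]
          exact Or.inl (Or.inr (fvL_subset hδ hn))
        · simp only [hA, Finset.mem_union]
          exact Or.inr (bvL_subset hδ hn)
      have hNconsis : ∀ δ ∈ r.1, ¬ SetDerives {α} δ :=
        satNegs_consistent _ _ _ hαfvA hlsOK
      have hPder : ∀ χ ∈ (pairOf φ0 ψ0 (α :: l)).P, SetDerives {α} χ := by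
        intro χ hχ
        exact instCl_setDerives hαbvB (tmOk_of_V φ0 ψ0 hVBb) hχ
      refine ⟨?_, ?_, ?_, ?_, ?_, ?_, ?_, hVBb, ?_, ?_, ?_, ?_⟩
      · intro δ hδ hsd
        exact hNconsis δ hδ (setDerives_cut hPder hsd)
      · intro χ hχ
        refine instCl_fv ?_ (tmOf_fv φ0 ψ0) hχ
        intro χ' hχ' n hn
        rw [Set.mem_singleton_iff] at hχ'; subst hχ'
        exact Finset.mem_union_left _ (hαfv n hn)
      · intro χ hχ
        exact instCl_bv hαbvB hχ
      · intro χ hχ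
        refine instCl_consts ?_ (tmOf_consts φ0 ψ0) hχ
        intro χ' hχ'
        rw [Set.mem_singleton_iff] at hχ'; subst hχ'
        exact hαC
      · intro χ hχ n hn
        have hW : ∀ δ ∈ obls, ∀ n ∈ fvF δ, n ∈ d.V :=
          fun δ hδ n hn => (hoblsrc δ hδ).1 n hn
        rcases satNegs_fv _ _ _ hW χ hχ n hn with h | h
        · exact Finset.mem_union_left _ h
        · exact Finset.mem_union_right _ h
      · intro χ hχ
        exact satNegs_bv _ _ _ (fun δ hδ => (hoblsrc δ hδ).2.1) χ hχ
      · intro χ hχ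
        exact satNegs_consts _ _ _ (fun δ hδ => (hoblsrc δ hδ).2.2.1) χ hχ
      · exact Finset.mem_union_left _ good.zdV
      · intro x θ hθ
        obtain ⟨z, hz1, hz2, hz3⟩ := satNegs_S2 _ _ _ x θ hθ
        refine ⟨z, fun hB => hz1 (by
          simp only [hA, Finset.mem_union]
          exact Or.inl (Or.inl (Or.inl (Or.inl (Or.inr hB))))),
          Finset.mem_union_right _ hz2, hz3⟩
      · exact fun a b h => satNegs_S4 _ _ _ a b h
      · exact ⟨α, InstCl.base rfl⟩

end Invariant

section TheModel

lemma forces_top_iff (M : Model Sig) (w : M.W) (g : ℕ → M.U) :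
    M.Forces w g .top ↔ True := Iff.rfl

lemma forces_rel_iff (M : Model Sig) (w : M.W) (g : ℕ → M.U) (S : Sig.Rel)
    (ts : Fin (Sig.arity S) → Term Sig) :
    M.Forces w g (.rel S ts) ↔ (fun i => M.tval w g (ts i)) ∈ M.J w S := Iff.rfl

lemma forces_and_iff (M : Model Sig) (w : M.W) (g : ℕ → M.U) (α β : Formula Sig) :
    M.Forces w g (.and α β) ↔ M.Forces w g α ∧ M.Forces w g β := Iff.rfl

lemma forces_dia_iff (M : Model Sig) (w : M.W) (g : ℕ → M.U) (α : Formula Sig) :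
    M.Forces w g (.dia α) ↔ ∃ v, M.R w v ∧ M.Forces v g α := Iff.rfl

lemma forces_all_iff (M : Model Sig) (w : M.W) (g : ℕ → M.U) (x : ℕ) (θ : Formula Sig) :
    M.Forces w g (.all x θ) ↔
      ∀ h : ℕ → M.U, M.IsAssignment w h → AltOn {x} g h → M.Forces w h θ := Iff.rfl

variable (φ0 ψ0 : Formula Sig)

open scoped Classical in
noncomputable def interpT (l : List (Formula Sig)) : Term Sig → ℕ ⊕ Sig.Const
  | .var y => if y ∈ (pairOf φ0 ψ0 l).V then .inl y else .inl (zd φ0 ψ0)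
  | .const c => if c ∈ C0 φ0 ψ0 then .inr c else .inl (zd φ0 ψ0)

variable (hfree : ∀ x, x ∈ fvF φ0 ∪ fvF ψ0 → x ∉ Bb φ0 ψ0)
variable (hcons : ¬ Derives φ0 ψ0)

lemma C0_finite : (C0 φ0 ψ0).Finite :=
  (consts_finite φ0).union (consts_finite ψ0)

include hfree hcons in
lemma zd_mem_V {l : List (Formula Sig)} (hv : Valid φ0 ψ0 l) :
    zd φ0 ψ0 ∈ (pairOf φ0 ψ0 l).V :=
  (goodW φ0 ψ0 hfree hcons l hv).zdV

open scoped Classical in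
noncomputable def CM : Model Sig where
  W := {l : List (Formula Sig) // Valid φ0 ψ0 l}
  U := ℕ ⊕ Sig.Const
  nonempty := ⟨⟨[], trivial⟩⟩
  R w v := ∃ a, a ≠ [] ∧ v.1 = a ++ w.1
  D w := (fun n => Sum.inl n) '' ((pairOf φ0 ψ0 w.1).V : Set ℕ) ∪
    Sum.inr '' C0 φ0 ψ0
  Dfin w := Set.Finite.union
    (Set.Finite.image _ (Finset.finite_toSet _))
    (Set.Finite.image _ (C0_finite φ0 ψ0))
  I _ c := if c ∈ C0 φ0 ψ0 then .inr c else .inl (zd φ0 ψ0)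
  Imem w c := by
    show (if c ∈ C0 φ0 ψ0 then (Sum.inr c : ℕ ⊕ Sig.Const) else .inl (zd φ0 ψ0)) ∈ _
    by_cases hc : c ∈ C0 φ0 ψ0
    · rw [if_pos hc]
      exact Set.mem_union_right _ ⟨c, hc, rfl⟩
    · rw [if_neg hc]
      exact Set.mem_union_left _ ⟨zd φ0 ψ0, by
        simpa using zd_mem_V φ0 ψ0 hfree hcons w.2, rfl⟩
  J w S := {f | ∃ ts, Formula.rel S ts ∈ (pairOf φ0 ψ0 w.1).P ∧
    ∀ i, f i = interpT φ0 ψ0 w.1 (ts i)}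
  Jmem w S f hf i := by
    obtain ⟨ts, _, heq⟩ := hf
    rw [heq i]
    cases hts : ts i with
    | var y =>
        simp only [interpT]
        by_cases hy : y ∈ (pairOf φ0 ψ0 w.1).V
        · rw [if_pos hy]
          exact Set.mem_union_left _ ⟨y, by simpa using hy, rfl⟩
        · rw [if_neg hy]
          exact Set.mem_union_left _ ⟨zd φ0 ψ0, by
            simpa using zd_mem_V φ0 ψ0 hfree hcons w.2, rfl⟩
    | const c =>
        simp only [interpT]
        by_cases hc : c ∈ C0 φ0 ψ0
        · rw [if_pos hc]
          exact Set.mem_union_right _ ⟨c, hc, rfl⟩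
        · rw [if_neg hc]
          exact Set.mem_union_left _ ⟨zd φ0 ψ0, by
            simpa using zd_mem_V φ0 ψ0 hfree hcons w.2, rfl⟩

lemma CM_inc : ∀ w u, (CM φ0 ψ0 hfree hcons).R w u →
    (CM φ0 ψ0 hfree hcons).D w ⊆ (CM φ0 ψ0 hfree hcons).D u := by
  rintro w u ⟨a, _, ha⟩ d hd
  rcases hd with ⟨y, hy, rfl⟩ | hd
  · refine Set.mem_union_left _ ⟨y, ?_, rfl⟩
    have := V_mono_append φ0 ψ0 w.1 a (by simpa using hy)
    rw [← ha] at this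
    simpa using this
  · exact Set.mem_union_right _ hd

lemma CM_adequate : (CM φ0 ψ0 hfree hcons).Adequate := by
  refine ⟨CM_inc φ0 ψ0 hfree hcons, ?_, ?_⟩
  · rintro w u v ⟨a, ha, hu⟩ ⟨b, hb, hv⟩
    refine ⟨b ++ a, by simp [hb], ?_⟩
    rw [hv, hu, List.append_assoc]
  · rintro w u _ c
    rfl

noncomputable def gh (l : List (Formula Sig)) : ℕ → ℕ ⊕ Sig.Const :=
  fun n => interpT φ0 ψ0 l (.var n)

include hfree hcons in
lemma gh_assignment (w : (CM φ0 ψ0 hfree hcons).W) :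
    (CM φ0 ψ0 hfree hcons).IsAssignment w (gh φ0 ψ0 w.1) := by
  intro n
  show interpT φ0 ψ0 w.1 (.var n) ∈ _
  simp only [interpT]
  by_cases hy : n ∈ (pairOf φ0 ψ0 w.1).V
  · rw [if_pos hy]
    exact Set.mem_union_left _ ⟨n, by simpa using hy, rfl⟩
  · rw [if_neg hy]
    exact Set.mem_union_left _ ⟨zd φ0 ψ0, by
      simpa using zd_mem_V φ0 ψ0 hfree hcons w.2, rfl⟩

lemma tval_gh (w : (CM φ0 ψ0 hfree hcons).W) (t : Term Sig) :
    (CM φ0 ψ0 hfree hcons).tval w (gh φ0 ψ0 w.1) t = interpT φ0 ψ0 w.1 t := by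
  cases t with
  | var y => rfl
  | const c => rfl

lemma interpT_inj {l : List (Formula Sig)} {t1 t2 : Term Sig}
    (h1v : ∀ n ∈ tfvF t1, n ∈ (pairOf φ0 ψ0 l).V) (h1c : t1.consts ⊆ C0 φ0 ψ0)
    (h2v : ∀ n ∈ tfvF t2, n ∈ (pairOf φ0 ψ0 l).V) (h2c : t2.consts ⊆ C0 φ0 ψ0)
    (heq : interpT φ0 ψ0 l t1 = interpT φ0 ψ0 l t2) : t1 = t2 := by
  cases t1 with
  | var y1 =>
      have hy1 : y1 ∈ (pairOf φ0 ψ0 l).V := h1v y1 (by simp [tfvF])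
      cases t2 with
      | var y2 =>
          have hy2 : y2 ∈ (pairOf φ0 ψ0 l).V := h2v y2 (by simp [tfvF])
          simp only [interpT, if_pos hy1, if_pos hy2, Sum.inl.injEq] at heq
          rw [heq]
      | const c2 =>
          have hc2 : c2 ∈ C0 φ0 ψ0 := h2c (by simp [Term.consts])
          simp only [interpT, if_pos hy1, if_pos hc2] at heq
          exact absurd heq (by simp)
  | const c1 =>
      have hc1 : c1 ∈ C0 φ0 ψ0 := h1c (by simp [Term.consts])
      cases t2 with
      | var y2 =>
          have hy2 : y2 ∈ (pairOf φ0 ψ0 l).V := h2v y2 (by simp [tfvF])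
          simp only [interpT, if_pos hy2, if_pos hc1] at heq
          exact absurd heq (by simp)
      | const c2 =>
          have hc2 : c2 ∈ C0 φ0 ψ0 := h2c (by simp [Term.consts])
          simp only [interpT, if_pos hc1, if_pos hc2, Sum.inr.injEq] at heq
          rw [heq]

end TheModel

section Truth

variable (φ0 ψ0 : Formula Sig)
variable (hfree : ∀ x, x ∈ fvF φ0 ∪ fvF ψ0 → x ∉ Bb φ0 ψ0)
variable (hcons : ¬ Derives φ0 ψ0)

include hfree hcons in
lemma truth : ∀ (n : ℕ) (χ : Formula Sig), χ.size ≤ n →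
    ∀ w : (CM φ0 ψ0 hfree hcons).W,
      (χ ∈ (pairOf φ0 ψ0 w.1).P →
        (CM φ0 ψ0 hfree hcons).Forces w (gh φ0 ψ0 w.1) χ) ∧
      (χ ∈ (pairOf φ0 ψ0 w.1).N →
        ¬ (CM φ0 ψ0 hfree hcons).Forces w (gh φ0 ψ0 w.1) χ) := by
  intro n
  induction n with
  | zero =>
      intro χ hs
      have := size_pos χ
      omega
  | succ n IH =>
    intro χ hs w
    have gw := goodW φ0 ψ0 hfree hcons w.1 w.2
    cases χ with
    | top =>
        refine ⟨fun _ => trivial, fun hN hf => ?_⟩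
        obtain ⟨γ, hγ⟩ := gw.seed
        exact gw.consis _ hN ⟨γ, [], hγ, by simp, .topIntro γ⟩
    | rel S ts =>
        constructor
        · intro hP
          refine (forces_rel_iff _ _ _ ..).mpr ?_
          exact ⟨ts, hP, fun i => (tval_gh φ0 ψ0 hfree hcons w (ts i)).symm⟩
        · intro hN hf
          replace hf := (forces_rel_iff _ _ _ ..).mp hf
          obtain ⟨ts', hmem, heq⟩ := hf
          have hts : ts = ts' := by
            funext i
            refine interpT_inj φ0 ψ0 (l := w.1) ?_ ?_ ?_ ?_ ?_
            · intro m hm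
              refine gw.negFv _ hN m ?_
              simp only [fvF, Finset.mem_biUnion]
              exact ⟨i, Finset.mem_univ i, hm⟩
            · intro c hc
              refine gw.negC _ hN ?_
              simp only [Formula.consts, Set.mem_iUnion]
              exact ⟨i, hc⟩
            · intro m hm
              refine gw.posFv _ hmem m ?_
              simp only [fvF, Finset.mem_biUnion]
              exact ⟨i, Finset.mem_univ i, hm⟩
            · intro c hc
              refine gw.posC _ hmem ?_
              simp only [Formula.consts, Set.mem_iUnion]
              exact ⟨i, hc⟩
            · rw [← tval_gh φ0 ψ0 hfree hcons w (ts i), ← heq i]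
          rw [← hts] at hmem
          exact gw.consis _ hN (setDerives_of_mem hmem)
    | and α β =>
        have hsp1 := size_pos α
        have hsp2 := size_pos β
        have hsize : (Formula.and α β).size = α.size + β.size + 1 := rfl
        have hsα : α.size ≤ n := by omega
        have hsβ : β.size ≤ n := by omega
        constructor
        · intro hP
          refine (forces_and_iff _ _ _ ..).mpr ?_
          exact ⟨(IH α hsα w).1 (P_left φ0 ψ0 w.1 hP), (IH β hsβ w).1 (P_right φ0 ψ0 w.1 hP)⟩
        · intro hN hf
          replace hf := (forces_and_iff _ _ _ ..).mp hf
          rcases gw.S4 α β hN with h | h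
          · exact (IH α hsα w).2 h hf.1
          · exact (IH β hsβ w).2 h hf.2
    | dia α =>
        have hsize : (Formula.dia α).size = α.size + 1 := rfl
        have hsα : α.size ≤ n := by omega
        constructor
        · intro hP
          refine (forces_dia_iff _ _ _ ..).mpr ?_
          have hval : Valid φ0 ψ0 (α :: w.1) := ⟨w.2, hP⟩
          let v : (CM φ0 ψ0 hfree hcons).W := ⟨α :: w.1, hval⟩
          have hR : (CM φ0 ψ0 hfree hcons).R w v := ⟨[α], by simp, rfl⟩
          refine ⟨v, hR, ?_⟩
          have hmem : α ∈ (pairOf φ0 ψ0 v.1).P := InstCl.base rfl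
          have hforce := (IH α hsα v).1 hmem
          refine forces_congr_mp (CM_inc φ0 ψ0 hfree hcons)
            (gh_assignment φ0 ψ0 hfree hcons v)
            (fun m => CM_inc φ0 ψ0 hfree hcons w v hR
              (gh_assignment φ0 ψ0 hfree hcons w m)) ?_ hforce
          intro m hm
          have hmV : m ∈ (pairOf φ0 ψ0 w.1).V :=
            gw.posFv _ hP m (mem_fvF.mpr hm)
          have hmV' : m ∈ (pairOf φ0 ψ0 v.1).V := V_mono_cons φ0 ψ0 α w.1 hmV
          show interpT φ0 ψ0 v.1 (.var m) = interpT φ0 ψ0 w.1 (.var m)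
          simp only [interpT, if_pos hmV, if_pos hmV']
        · intro hN hf
          replace hf := (forces_dia_iff _ _ _ ..).mp hf
          obtain ⟨v, hR, hfv⟩ := hf
          obtain ⟨a, ha, hav⟩ := hR
          have hprop := (dia_prop φ0 ψ0 α a w.1 hN).2 ha
          rw [← hav] at hprop
          refine (IH α hsα v).2 hprop ?_
          refine forces_congr_mp (CM_inc φ0 ψ0 hfree hcons)
            (fun m => CM_inc φ0 ψ0 hfree hcons w v ⟨a, ha, hav⟩
              (gh_assignment φ0 ψ0 hfree hcons w m))
            (gh_assignment φ0 ψ0 hfree hcons v) ?_ hfv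
          intro m hm
          have hmV : m ∈ (pairOf φ0 ψ0 w.1).V :=
            gw.negFv _ hN m (mem_fvF.mpr hm)
          have hmV' : m ∈ (pairOf φ0 ψ0 v.1).V := by
            rw [hav]
            exact V_mono_append φ0 ψ0 w.1 a hmV
          show interpT φ0 ψ0 w.1 (.var m) = interpT φ0 ψ0 v.1 (.var m)
          simp only [interpT, if_pos hmV, if_pos hmV']
    | all x θ =>
        have hsize : (Formula.all x θ).size = θ.size + 1 := rfl
        have hsθ : θ.size ≤ n := by omega
        constructor
        · intro hP
          refine (forces_all_iff _ _ _ ..).mpr ?_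
          intro h hasg halt
          have hd := hasg x
          have hbvθ : ∀ y, y ∈ (pairOf φ0 ψ0 w.1).V → y ∉ bvF θ := by
            intro y hyV hyb
            exact gw.VBb y hyV (gw.posBv _ hP (by
              simp only [bvF, Finset.mem_insert]
              exact Or.inr hyb))
          have key : ∃ t ∈ TmOf φ0 ψ0 (pairOf φ0 ψ0 w.1).V,
              (CM φ0 ψ0 hfree hcons).tval w (gh φ0 ψ0 w.1) t = h x ∧
                θ.freeFor x t := by
            rcases hd with ⟨y, hy, hyd⟩ | ⟨c, hc, hcd⟩
            · have hyV : y ∈ (pairOf φ0 ψ0 w.1).V := by simpa using hy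
              refine ⟨.var y, Or.inl ⟨y, hyV, rfl⟩, ?_, ?_⟩
              · rw [tval_gh]
                show interpT φ0 ψ0 w.1 (.var y) = h x
                rw [show interpT φ0 ψ0 w.1 (.var y) = .inl y from by
                  simp only [interpT, if_pos hyV]]
                exact hyd
              · exact freeFor_var_of_not_bv (hbvθ y hyV) x
            · refine ⟨.const c, Or.inr ⟨c, hc, rfl⟩, ?_, freeFor_const θ x c⟩
              rw [tval_gh]
              show interpT φ0 ψ0 w.1 (.const c) = h x
              rw [show interpT φ0 ψ0 w.1 (.const c) = .inr c from by
                simp only [interpT, if_pos hc]]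
              exact hcd
          obtain ⟨t, htT, htv, hff⟩ := key
          have hsub : θ.subst x t ∈ (pairOf φ0 ψ0 w.1).P := P_inst φ0 ψ0 w.1 hP htT
          have hsize' : (θ.subst x t).size ≤ n := by
            rw [Formula.size_subst]; exact hsθ
          have hforce := (IH _ hsize' w).1 hsub
          have hres := (forces_subst (CM_inc φ0 ψ0 hfree hcons)
            ((CM_adequate φ0 ψ0 hfree hcons).2.2) hff
            (gh_assignment φ0 ψ0 hfree hcons w)).mp hforce
          rw [htv] at hres
          have hupd : Function.update (gh φ0 ψ0 w.1) x (h x) = h := by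
            funext m
            rcases eq_or_ne m x with rfl | hne
            · exact Function.update_self _ _ _
            · refine (Function.update_of_ne hne _ _).trans ?_
              exact halt m (by simp [hne])
          exact cast (congrArg (fun g => (CM φ0 ψ0 hfree hcons).Forces w g θ) hupd) hres
        · intro hN hf
          replace hf := (forces_all_iff _ _ _ ..).mp hf
          obtain ⟨z, hzB, hzV, hzmem⟩ := gw.S2 x θ hN
          have hff : θ.freeFor x (.var z) := by
            refine freeFor_var_of_not_bv (fun hzb => hzB ?_) x
            exact gw.negBv _ hN (by
              simp only [bvF, Finset.mem_insert]
              exact Or.inr hzb)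
          have hsize' : (θ.subst x (.var z)).size ≤ n := by
            rw [Formula.size_subst]; exact hsθ
          refine (IH _ hsize' w).2 hzmem ?_
          refine (forces_subst (CM_inc φ0 ψ0 hfree hcons)
            ((CM_adequate φ0 ψ0 hfree hcons).2.2) hff
            (gh_assignment φ0 ψ0 hfree hcons w)).mpr ?_
          have hval : (CM φ0 ψ0 hfree hcons).tval w (gh φ0 ψ0 w.1) (.var z) =
              .inl z := by
            rw [tval_gh]
            simp only [interpT, if_pos hzV]
            rfl
          rw [hval]
          refine hf _ ?_ ?_
          · intro m
            rcases eq_or_ne m x with rfl | hne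
            · refine (congrArg (· ∈ (CM φ0 ψ0 hfree hcons).D w) (Function.update_self (a := m) (f := gh φ0 ψ0 w.1) _)).mpr ?_
              exact Set.mem_union_left _ ⟨z, by simpa using hzV, rfl⟩
            · refine (congrArg (· ∈ (CM φ0 ψ0 hfree hcons).D w) (Function.update_of_ne hne _ _)).mpr ?_
              exact gh_assignment φ0 ψ0 hfree hcons w m
          · intro m hm
            exact (Function.update_of_ne (by simpa using hm) _ _).symm

end Truth

/-! #### Assembly -/

lemma exists_model (φ0 ψ0 : Formula Sig)
    (hfree : ∀ x, x ∈ fvF φ0 ∪ fvF ψ0 → x ∉ Bb φ0 ψ0)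
    (hcons : ¬ Derives φ0 ψ0) :
    ∃ M : Model Sig, M.Adequate ∧ ∃ (w : M.W) (g : ℕ → M.U),
      M.IsAssignment w g ∧ M.Forces w g φ0 ∧ ¬ M.Forces w g ψ0 := by
  refine ⟨CM φ0 ψ0 hfree hcons, CM_adequate φ0 ψ0 hfree hcons,
    ⟨[], trivial⟩, gh φ0 ψ0 [], gh_assignment φ0 ψ0 hfree hcons _, ?_, ?_⟩
  · exact (truth φ0 ψ0 hfree hcons φ0.size φ0 le_rfl ⟨[], trivial⟩).1
      (InstCl.base rfl)
  · exact (truth φ0 ψ0 hfree hcons ψ0.size ψ0 le_rfl ⟨[], trivial⟩).2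
      (satNegs_mem _ _ _ _ (by simp))

lemma derives_unsubst {φ ψ : Formula Sig} {x z : ℕ}
    (hzφfv : z ∉ φ.fv) (hzφbv : z ∉ bvF φ) (hzψfv : z ∉ ψ.fv) (hzψbv : z ∉ bvF ψ)
    (hzx : z ≠ x)
    (h : Derives (φ.subst x (.var z)) (ψ.subst x (.var z))) : Derives φ ψ := by
  have h2 := Derives.termInst h (freeFor_back hzφfv hzφbv)
    (freeFor_back hzψfv hzψbv) (x := z) (t := .var x)
  rw [subst_subst (.var x) hzφfv hzφbv hzx, subst_subst (.var x) hzψfv hzψbv hzx,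
    subst_var_self, subst_var_self] at h2
  exact h2

end QRC1C
/-- Relational completeness of QRC₁: if φ ⊢ ψ is not derivable, then there
are an adequate model M, a world w, and a w-assignment g with M,w ⊩^g φ and M,w ⊮^g ψ. -/
theorem qrc1_relational_completeness (Sig : Signature) (φ ψ : Formula Sig)
    (h : ¬ Derives φ ψ) :
    ∃ (M : Model Sig), M.Adequate ∧ ∃ (w : M.W) (g : ℕ → M.U),
      M.IsAssignment w g ∧ M.Forces w g φ ∧ ¬ M.Forces w g ψ := by
  classical
  open QRC1C in
  suffices H : ∀ (k : ℕ) (φ ψ : Formula Sig),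
      ((fvF φ ∪ fvF ψ) ∩ (bvF φ ∪ bvF ψ)).card ≤ k → ¬ Derives φ ψ →
      ∃ M : Model Sig, M.Adequate ∧ ∃ (w : M.W) (g : ℕ → M.U),
        M.IsAssignment w g ∧ M.Forces w g φ ∧ ¬ M.Forces w g ψ by
    exact H _ φ ψ le_rfl h
  intro k
  induction k with
  | zero =>
      intro φ ψ hcard hnd
      refine exists_model φ ψ ?_ hnd
      intro x hx hB
      have hmem : x ∈ (fvF φ ∪ fvF ψ) ∩ (bvF φ ∪ bvF ψ) :=
        Finset.mem_inter.mpr ⟨hx, hB⟩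
      have := Finset.card_pos.mpr ⟨x, hmem⟩
      omega
  | succ k ihk =>
      intro φ ψ hcard hnd
      by_cases hne : (fvF φ ∪ fvF ψ) ∩ (bvF φ ∪ bvF ψ) = ∅
      · refine exists_model φ ψ ?_ hnd
        intro x hx hB
        have hmem : x ∈ (fvF φ ∪ fvF ψ) ∩ (bvF φ ∪ bvF ψ) :=
          Finset.mem_inter.mpr ⟨hx, hB⟩
        rw [hne] at hmem
        simp at hmem
      · obtain ⟨x, hx⟩ := Finset.nonempty_iff_ne_empty.mpr hne
        obtain ⟨hxfv, hxbv⟩ := Finset.mem_inter.mp hx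
        set G := (fvF φ ∪ fvF ψ) ∪ (bvF φ ∪ bvF ψ) with hG
        have hzG := fresh_not_mem G
        set z := fresh G with hzdef
        have hzfφ : z ∉ φ.fv := fun hh => hzG (by
          simp only [hG, Finset.mem_union]
          exact Or.inl (Or.inl (mem_fvF.mpr hh)))
        have hzfψ : z ∉ ψ.fv := fun hh => hzG (by
          simp only [hG, Finset.mem_union]
          exact Or.inl (Or.inr (mem_fvF.mpr hh)))
        have hzbφ : z ∉ bvF φ := fun hh => hzG (by
          simp only [hG, Finset.mem_union]
          exact Or.inr (Or.inl hh))
        have hzbψ : z ∉ bvF ψ := fun hh => hzG (by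
          simp only [hG, Finset.mem_union]
          exact Or.inr (Or.inr hh))
        have hzbb : z ∉ bvF φ ∪ bvF ψ := by
          simp only [Finset.mem_union]
          rintro (hh | hh)
          · exact hzbφ hh
          · exact hzbψ hh
        have hzx : z ≠ x := by
          rintro rfl
          exact hzG (by
            simp only [hG, Finset.mem_union]
            exact Or.inl (by simpa using hxfv))
        have hnd1 : ¬ Derives (φ.subst x (.var z)) (ψ.subst x (.var z)) :=
          fun hD => hnd (derives_unsubst hzfφ hzbφ hzfψ hzbψ hzx hD)
        have hsub : (fvF (φ.subst x (.var z)) ∪ fvF (ψ.subst x (.var z))) ∩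
            (bvF (φ.subst x (.var z)) ∪ bvF (ψ.subst x (.var z))) ⊆
            ((fvF φ ∪ fvF ψ) ∩ (bvF φ ∪ bvF ψ)).erase x := by
          intro m hm
          obtain ⟨hmfv, hmbv⟩ := Finset.mem_inter.mp hm
          rw [bvF_subst, bvF_subst] at hmbv
          have hmz : m ≠ z := by
            rintro rfl
            exact hzbb hmbv
          have hmfv' : m ∈ fvF φ ∪ fvF ψ ∧ m ≠ x := by
            rcases Finset.mem_union.mp hmfv with hh | hh
            · rcases fv_subst (mem_fvF.mp hh) with ⟨h1, h2⟩ | h1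
              · exact ⟨Finset.mem_union_left _ (mem_fvF.mpr h1), h2⟩
              · simp only [Term.fv, Set.mem_singleton_iff] at h1
                exact absurd h1 hmz
            · rcases fv_subst (mem_fvF.mp hh) with ⟨h1, h2⟩ | h1
              · exact ⟨Finset.mem_union_right _ (mem_fvF.mpr h1), h2⟩
              · simp only [Term.fv, Set.mem_singleton_iff] at h1
                exact absurd h1 hmz
          exact Finset.mem_erase.mpr ⟨hmfv'.2,
            Finset.mem_inter.mpr ⟨hmfv'.1, hmbv⟩⟩
        have hcard1 : ((fvF (φ.subst x (.var z)) ∪ fvF (ψ.subst x (.var z))) ∩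
            (bvF (φ.subst x (.var z)) ∪ bvF (ψ.subst x (.var z)))).card ≤ k := by
          have h1 := Finset.card_le_card hsub
          have h2 := Finset.card_erase_of_mem hx
          have h3 := Finset.card_pos.mpr ⟨x, hx⟩
          omega
        obtain ⟨M, hadq, w, g, hasg, hf1, hf2⟩ := ihk _ _ hcard1 hnd1
        obtain ⟨hinc, htrans, hconc⟩ := hadq
        have hffφ : φ.freeFor x (.var z) := freeFor_var_of_not_bv hzbφ x
        have hffψ : ψ.freeFor x (.var z) := freeFor_var_of_not_bv hzbψ x
        have h1 := (forces_subst hinc hconc hffφ hasg).mp hf1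
        have h2 : ¬ M.Forces w (Function.update g x (M.tval w g (.var z))) ψ :=
          fun hf => hf2 ((forces_subst hinc hconc hffψ hasg).mpr hf)
        refine ⟨M, ⟨hinc, htrans, hconc⟩, w,
          Function.update g x (M.tval w g (.var z)), ?_, h1, h2⟩
        intro m
        rcases eq_or_ne m x with rfl | hne'
        · rw [Function.update_self]
          exact tval_mem hasg _
        · rw [Function.update_of_ne hne']
          exact hasg m
end
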